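/- arXiv:2001.10286 — 7 statements merged into one kernel-verified Lean document; each statement's English description precedes it below -/
import Mathlib

section
/- Let G be a group with finite symmetric generating set X and P a positive cone of G. Then for every g ∈ P there exists a geodesic ray starting at g entirely contained in P; in particular every connected component of P in the Cayley graph Γ(G,X) is infinite. -/
open scoped Pointwise

/-- A positive cone of a group `G`: a subsemigroup `P` such that
`G = P ⊔ P⁻¹ ⊔ {1}` (disjoint union). -/
def IsPositiveCone {G : Type*} [Group G] (P : Set G) : Prop :=
  (∀ a ∈ P, ∀ b ∈ P, a * b ∈ P) ∧
  (∀ g : G, g ∈ P ∨ g⁻¹ ∈ P ∨ g = 1) ∧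
  (∀ g ∈ P, g⁻¹ ∉ P) ∧
  (1 : G) ∉ P

/-- Word length of `g` with respect to the generating set `X`. -/
noncomputable def wordLength {G : Type*} [Group G] (X : Set G) (g : G) : ℕ :=
  sInf {n | ∃ l : List G, (∀ x ∈ l, x ∈ X) ∧ l.length = n ∧ l.prod = g}

/-- Word metric on `G` with respect to `X`. -/
noncomputable def wordDist {G : Type*} [Group G] (X : Set G) (g h : G) : ℕ :=
  wordLength X (g⁻¹ * h)

/-- An `r`-path from `a` to `b` supported in `S` (consecutive word-metric
distances at most `r`). -/
def IsRPath {G : Type*} [Group G] (X : Set G) (r : ℕ) (S : Set G) (a b : G) : Prop :=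
  ∃ l : List G, l ≠ [] ∧ l.head? = some a ∧ l.getLast? = some b ∧
    (∀ x ∈ l, x ∈ S) ∧ l.Chain' (fun u v => wordDist X u v ≤ r)

/-- `S` is `r`-coarsely connected in the Cayley graph `Γ(G,X)`. -/
def CoarselyConnectedWith {G : Type*} [Group G] (X : Set G) (r : ℕ) (S : Set G) : Prop :=
  ∀ a ∈ S, ∀ b ∈ S, IsRPath X r S a b

/-- `X` is a finite symmetric generating set of `G`. -/
def IsGenSet {G : Type*} [Group G] (X : Set G) : Prop :=
  X.Finite ∧ (∀ x ∈ X, x⁻¹ ∈ X) ∧ Subgroup.closure X = ⊤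

/-- A positive cone on a subset `K` of `G` (used for subgroups such as kernels). -/
def IsPositiveConeOn {G : Type*} [Group G] (K P : Set G) : Prop :=
  P ⊆ K ∧ (∀ a ∈ P, ∀ b ∈ P, a * b ∈ P) ∧ (∀ g ∈ K, g ∈ P ∨ g⁻¹ ∈ P ∨ g = 1) ∧
  (∀ g ∈ P, g⁻¹ ∉ P) ∧ (1 : G) ∉ P

/-- The sub-semigroup generated by `S`: nonempty products of elements of `S`. -/
def SemigroupClosure {G : Type*} [Group G] (S : Set G) : Set G :=
  {g | ∃ l : List G, l ≠ [] ∧ (∀ x ∈ l, x ∈ S) ∧ l.prod = g}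

namespace Stmt5Aux

variable {G : Type*} [Group G] {X P : Set G}

lemma wl_le {g : G} {l : List G} (hl : ∀ x ∈ l, x ∈ X) (hprod : l.prod = g) :
    wordLength X g ≤ l.length := Nat.sInf_le ⟨l, hl, rfl, hprod⟩

lemma wl_set_nonempty (hX : IsGenSet X) (g : G) :
    {n | ∃ l : List G, (∀ x ∈ l, x ∈ X) ∧ l.length = n ∧ l.prod = g}.Nonempty := by
  have hg : g ∈ Submonoid.closure (X ∪ X⁻¹) := by
    rw [← Subgroup.closure_toSubmonoid, hX.2.2]; trivial
  obtain ⟨l, hl, hprod⟩ := Submonoid.exists_list_of_mem_closure hg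
  refine ⟨l.length, l, fun x hx => ?_, rfl, hprod⟩
  rcases hl x hx with h | h
  · exact h
  · have : x⁻¹ ∈ X := Set.mem_inv.mp h
    simpa using hX.2.1 _ this

lemma wl_spec (hX : IsGenSet X) (g : G) :
    ∃ l : List G, (∀ x ∈ l, x ∈ X) ∧ l.length = wordLength X g ∧ l.prod = g :=
  Nat.sInf_mem (wl_set_nonempty hX g)

lemma wl_one : wordLength X (1 : G) = 0 :=
  Nat.le_zero.mp (wl_le (l := []) (by simp) (by simp))

lemma wl_eq_zero (hX : IsGenSet X) {g : G} (h : wordLength X g = 0) : g = 1 := by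
  obtain ⟨l, -, hlen, hprod⟩ := wl_spec hX g
  rw [h, List.length_eq_zero_iff] at hlen
  simpa [hlen] using hprod.symm

lemma wl_inv_le (hX : IsGenSet X) (g : G) : wordLength X g⁻¹ ≤ wordLength X g := by
  obtain ⟨l, hl, hlen, hprod⟩ := wl_spec hX g
  have := wl_le (l := (l.map fun x => x⁻¹).reverse) (X := X)
    (fun x hx => by
      simp only [List.mem_reverse, List.mem_map] at hx
      obtain ⟨y, hy, rfl⟩ := hx
      exact hX.2.1 _ (hl y hy))
    (by rw [← List.prod_inv_reverse, hprod])
  simpa [hlen] using this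

lemma wl_inv (hX : IsGenSet X) (g : G) : wordLength X g⁻¹ = wordLength X g :=
  le_antisymm (wl_inv_le hX g) (by simpa using wl_inv_le hX g⁻¹)

lemma wl_mul (hX : IsGenSet X) (a b : G) :
    wordLength X (a * b) ≤ wordLength X a + wordLength X b := by
  obtain ⟨la, hla, hlena, hproda⟩ := wl_spec hX a
  obtain ⟨lb, hlb, hlenb, hprodb⟩ := wl_spec hX b
  have := wl_le (l := la ++ lb) (X := X)
    (fun x hx => by rcases List.mem_append.mp hx with h | h; exacts [hla x h, hlb x h])
    (by rw [List.prod_append, hproda, hprodb])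
  simpa [hlena, hlenb] using this

lemma wd_self (a : G) : wordDist X a a = 0 := by simp [wordDist, wl_one]

lemma wd_symm (hX : IsGenSet X) (a b : G) : wordDist X a b = wordDist X b a := by
  have h : (a⁻¹ * b)⁻¹ = b⁻¹ * a := by group
  rw [wordDist, wordDist, ← h, wl_inv hX]

lemma wd_triangle (hX : IsGenSet X) (a b c : G) :
    wordDist X a c ≤ wordDist X a b + wordDist X b c := by
  have h : a⁻¹ * c = (a⁻¹ * b) * (b⁻¹ * c) := by group
  rw [wordDist, h]
  exact wl_mul hX _ _

/-- The right-invariant order relation associated to the cone. -/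
def R (P : Set G) (a b : G) : Prop := a = b ∨ b * a⁻¹ ∈ P

lemma R_refl (a : G) : R P a a := Or.inl rfl

lemma R_total (hP : IsPositiveCone P) (a b : G) : R P a b ∨ R P b a := by
  rcases hP.2.1 (b * a⁻¹) with h | h | h
  · exact Or.inl (Or.inr h)
  · right; right; simpa [mul_inv_rev] using h
  · left; left
    have h2 : b = a := by
      have := congrArg (· * a) h; simpa using this
    exact h2.symm

lemma R_antisymm (hP : IsPositiveCone P) {a b : G} (h1 : R P a b) (h2 : R P b a) : a = b := by
  rcases h1 with h1 | h1
  · exact h1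
  rcases h2 with h2 | h2
  · exact h2.symm
  exact absurd h2 (by simpa [mul_inv_rev] using hP.2.2.1 _ h1)

lemma R_trans (hP : IsPositiveCone P) {a b c : G} (h1 : R P a b) (h2 : R P b c) : R P a c := by
  rcases h1 with rfl | h1
  · exact h2
  rcases h2 with rfl | h2
  · exact Or.inr h1
  right
  have h : c * a⁻¹ = (c * b⁻¹) * (b * a⁻¹) := by group
  rw [h]; exact hP.1 _ h2 _ h1

lemma R_mul_right {a b : G} (c : G) (h : R P a b) : R P (a * c) (b * c) := by
  rcases h with rfl | h
  · exact Or.inl rfl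
  · right; simpa [mul_inv_rev, mul_assoc] using h

lemma list_max (hP : IsPositiveCone P) :
    ∀ l : List G, l ≠ [] → ∃ s ∈ l, ∀ x ∈ l, R P x s := by
  intro l
  induction l with
  | nil => intro h; exact absurd rfl h
  | cons a l ih =>
    intro _
    rcases eq_or_ne l [] with rfl | hne
    · exact ⟨a, by simp, by simp [R_refl]⟩
    obtain ⟨s, hs, hmax⟩ := ih hne
    rcases R_total hP a s with h | h
    · exact ⟨s, List.mem_cons_of_mem _ hs, fun x hx => by
        rcases List.mem_cons.mp hx with rfl | hx
        exacts [h, hmax x hx]⟩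
    · exact ⟨a, List.mem_cons_self, fun x hx => by
        rcases List.mem_cons.mp hx with rfl | hx
        exacts [R_refl _, R_trans hP (hmax x hx) h]⟩

lemma set_max (hP : IsPositiveCone P) {S : Set G} (hfin : S.Finite) (hne : S.Nonempty) :
    ∃ s ∈ S, ∀ x ∈ S, R P x s := by
  have hne' : hfin.toFinset ≠ ∅ :=
    Finset.nonempty_iff_ne_empty.mp (hfin.toFinset_nonempty.mpr hne)
  have hl : hfin.toFinset.toList ≠ [] := fun h => hne' (Finset.toList_eq_nil.mp h)
  obtain ⟨s, hs, hmax⟩ := list_max hP _ hl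
  rw [Finset.mem_toList, Set.Finite.mem_toFinset] at hs
  exact ⟨s, hs, fun x hx => hmax x (by rwa [Finset.mem_toList, Set.Finite.mem_toFinset])⟩

lemma ball_one_finite (hX : IsGenSet X) (n : ℕ) : {h : G | wordLength X h ≤ n}.Finite := by
  induction n with
  | zero =>
    apply Set.Finite.subset (Set.finite_singleton (1 : G))
    intro h hh
    exact wl_eq_zero hX (Nat.le_zero.mp hh)
  | succ n ih =>
    apply Set.Finite.subset (ih.union (ih.mul hX.1))
    intro h hh
    simp only [Set.mem_setOf_eq] at hh
    obtain ⟨l, hl, hlen, hprod⟩ := wl_spec hX h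
    rcases l.eq_nil_or_concat with rfl | ⟨l', x, rfl⟩
    · left
      simp only [List.prod_nil] at hprod
      show wordLength X h ≤ n
      rw [← hprod, wl_one]
      exact Nat.zero_le _
    · right
      have hx : x ∈ X := hl x (by simp)
      have hlen2 : l'.length + 1 = wordLength X h := by simpa using hlen
      have hpl' : l'.prod ∈ {h : G | wordLength X h ≤ n} := by
        have := wl_le (l := l') (X := X) (fun y hy => hl y (by simp [hy])) rfl
        show wordLength X l'.prod ≤ n
        omega
      have heq : l'.prod * x = h := by simpa using hprod
      rw [← heq]
      exact Set.mul_mem_mul hpl' hx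

lemma ball_finite (hX : IsGenSet X) (g : G) (n : ℕ) :
    {h : G | wordDist X g h ≤ n}.Finite := by
  apply Set.Finite.subset ((ball_one_finite hX n).image (fun h => g * h))
  intro h hh
  exact ⟨g⁻¹ * h, hh, by group⟩

end Stmt5Aux

open Stmt5Aux in
/-- every element of a positive cone is the start of a geodesic ray
contained in the cone; in particular the connected component of any `g ∈ P` in
the Cayley graph is infinite. -/
theorem stmt_5 {G : Type*} [Group G] (X : Set G) (hX : IsGenSet X)
    (P : Set G) (hP : IsPositiveCone P) :
    ∀ g ∈ P, (∃ v : ℕ → G, v 0 = g ∧ (∀ n, v n ∈ P) ∧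
      (∀ n m : ℕ, (wordDist X (v n) (v m) : ℤ) = |(n : ℤ) - (m : ℤ)|)) ∧
      {b : G | IsRPath X 1 P g b}.Infinite := by
  intro g hg
  set B : ℕ → Set G := fun n => {h : G | wordDist X g h ≤ n} with hB
  have hself : ∀ n, g ∈ B n := fun n => by
    show wordDist X g g ≤ n
    rw [wd_self]; exact Nat.zero_le _
  have hmaxex : ∀ n, ∃ s ∈ B n, ∀ x ∈ B n, R P x s :=
    fun n => set_max hP (ball_finite hX g n) ⟨g, hself n⟩
  choose w hw hwmax using hmaxex
  have hmono : ∀ {n m : ℕ}, n ≤ m → ∀ {h : G}, h ∈ B n → h ∈ B m := by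
    intro n m hnm h hh
    exact le_trans hh hnm
  have hwP : ∀ n, w n ∈ P := by
    intro n
    rcases hwmax n g (hself n) with h | h
    · exact h ▸ hg
    · have h2 : w n = (w n * g⁻¹) * g := by group
      rw [h2]; exact hP.1 _ h _ hg
  have hw0 : w 0 = g := by
    have h0 : wordLength X (g⁻¹ * w 0) = 0 := Nat.le_zero.mp (hw 0)
    exact (inv_mul_eq_one.mp (wl_eq_zero hX h0)).symm
  -- decomposition of elements of balls
  have hdec : ∀ n (h : G), h ∈ B (n + 1) →
      ∃ u x, u ∈ B n ∧ (x ∈ X ∨ x = 1) ∧ h = u * x := by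
    intro n h hh
    obtain ⟨l, hl, hlen, hprod⟩ := wl_spec hX (g⁻¹ * h)
    rcases l.eq_nil_or_concat with rfl | ⟨l', x, rfl⟩
    · simp only [List.prod_nil] at hprod
      have : h = g := by
        have := inv_mul_eq_one.mp hprod.symm
        exact this.symm
      exact ⟨g, 1, hself n, Or.inr rfl, by rw [this, mul_one]⟩
    · have hh' : wordLength X (g⁻¹ * h) ≤ n + 1 := hh
      have hlen2 : l'.length + 1 = wordLength X (g⁻¹ * h) := by simpa using hlen
      refine ⟨g * l'.prod, x, ?_, Or.inl (hl x (by simp)), ?_⟩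
      · show wordLength X (g⁻¹ * (g * l'.prod)) ≤ n
        rw [inv_mul_cancel_left]
        have := wl_le (l := l') (X := X) (fun y hy => hl y (by simp [hy])) rfl
        omega
      · have : l'.prod * x = g⁻¹ * h := by simpa using hprod
        rw [mul_assoc, this, mul_inv_cancel_left]
  have hxlen : ∀ {x : G}, (x ∈ X ∨ x = 1) → wordLength X x ≤ 1 := by
    rintro x (hx | rfl)
    · exact wl_le (l := [x]) (by simpa) (by simp)
    · rw [wl_one]; exact Nat.zero_le _
  have hBmulx : ∀ {n : ℕ} {u x : G}, u ∈ B n → (x ∈ X ∨ x = 1) → u * x ∈ B (n + 1) := by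
    intro n u x hu hx
    show wordDist X g (u * x) ≤ n + 1
    have h2 : wordDist X u (u * x) ≤ 1 := by
      show wordLength X (u⁻¹ * (u * x)) ≤ 1
      rw [inv_mul_cancel_left]; exact hxlen hx
    exact le_trans (wd_triangle hX g u (u * x)) (Nat.add_le_add hu h2)
  have hkey : ∀ n, ∃ x, (x ∈ X ∨ x = 1) ∧ w (n + 1) = w n * x := by
    intro n
    obtain ⟨u, x, hu, hx, hdecomp⟩ := hdec n (w (n + 1)) (hw (n + 1))
    refine ⟨x, hx, ?_⟩
    have h1 : R P (w (n + 1)) (w n * x) := hdecomp ▸ R_mul_right x (hwmax n u hu)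
    have h2 : R P (w n * x) (w (n + 1)) := hwmax (n + 1) _ (hBmulx (hw n) hx)
    exact R_antisymm hP h1 h2
  have hd1 : ∀ n, wordDist X (w n) (w (n + 1)) ≤ 1 := by
    intro n
    obtain ⟨x, hx, hE⟩ := hkey n
    show wordLength X ((w n)⁻¹ * w (n + 1)) ≤ 1
    rw [hE, inv_mul_cancel_left]; exact hxlen hx
  have hstep2 : ∀ m, w (m + 1) = w m → w (m + 2) = w (m + 1) := by
    intro m hEq
    obtain ⟨u, x, hu, hx, hdecomp⟩ := hdec (m + 1) (w (m + 2)) (hw (m + 2))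
    have h1 : R P (w (m + 2)) (w (m + 1) * x) := hdecomp ▸ R_mul_right x (hwmax (m + 1) u hu)
    have hmem : w (m + 1) * x ∈ B (m + 1) := by
      rw [hEq]; exact hBmulx (hw m) hx
    have h2 : R P (w (m + 1) * x) (w (m + 1)) := hwmax (m + 1) _ hmem
    have h3 : R P (w (m + 2)) (w (m + 1)) := R_trans hP h1 h2
    have h4 : R P (w (m + 1)) (w (m + 2)) := hwmax (m + 2) _ (hmono (by omega) (hw (m + 1)))
    exact R_antisymm hP h3 h4
  have hstab : ∀ n, w (n + 1) = w n → ∀ m, n ≤ m → w m = w n := by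
    intro n hEq
    have hconsec : ∀ m, n ≤ m → w (m + 1) = w m := by
      intro m hm
      induction m, hm using Nat.le_induction with
      | base => exact hEq
      | succ m hm ih => exact hstep2 m ih
    intro m hm
    induction m, hm using Nat.le_induction with
    | base => rfl
    | succ m hm ih => rw [hconsec m hm, ih]
  have hposgen : ∃ p, p ∈ X ∧ p ∈ P := by
    have hg1 : g ≠ 1 := fun h => hP.2.2.2 (h ▸ hg)
    obtain ⟨l, hl, -, hprod⟩ := wl_spec hX g
    by_contra hc
    push_neg at hc
    have hall : ∀ x ∈ l, x = 1 := by
      intro x hx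
      rcases hP.2.1 x with h | h | h
      · exact absurd h (hc x (hl x hx))
      · exact absurd h (hc x⁻¹ (hX.2.1 x (hl x hx)))
      · exact h
    exact hg1 (hprod ▸ List.prod_eq_one hall)
  have hstrict : ∀ n, w (n + 1) ≠ w n := by
    intro n hEq
    obtain ⟨p, hpX, hpP⟩ := hposgen
    have hne : p * w n ≠ w n := by
      intro hE
      have hp1 : p = 1 := by
        have : p * w n = 1 * w n := by rw [hE, one_mul]
        exact mul_right_cancel this
      exact hP.2.2.2 (hp1 ▸ hpP)
    have hRlt : R P (w n) (p * w n) := Or.inr (by simpa [mul_assoc] using hpP)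
    set M := max (wordDist X g (p * w n)) (n + 1) with hM
    have hhM : p * w n ∈ B M := by
      show wordDist X g (p * w n) ≤ M
      exact le_max_left _ _
    have hwM : w M = w n := hstab n hEq M (le_trans (Nat.le_succ n) (le_max_right _ _))
    have hR2 : R P (p * w n) (w n) := by
      have h5 := hwmax M _ hhM
      rwa [hwM] at h5
    exact hne (R_antisymm hP hR2 hRlt)
  have hdexact : ∀ n, wordDist X g (w n) = n := by
    intro n
    refine le_antisymm (hw n) ?_
    by_contra hcon
    push_neg at hcon
    cases n with
    | zero => omega
    | succ m =>
      have hmem : w (m + 1) ∈ B m := Nat.lt_succ_iff.mp hcon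
      have h1 : R P (w (m + 1)) (w m) := hwmax m _ hmem
      have h2 : R P (w m) (w (m + 1)) := hwmax (m + 1) _ (hmono (Nat.le_succ m) (hw m))
      exact hstrict m (R_antisymm hP h1 h2)
  have hchain : ∀ n k, wordDist X (w n) (w (n + k)) ≤ k := by
    intro n k
    induction k with
    | zero => simp [wd_self]
    | succ k ih =>
      have htr := wd_triangle hX (w n) (w (n + k)) (w (n + k + 1))
      have := hd1 (n + k)
      show wordDist X (w n) (w (n + k + 1)) ≤ k + 1
      omega
  have hdist : ∀ n k, wordDist X (w n) (w (n + k)) = k := by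
    intro n k
    refine le_antisymm (hchain n k) ?_
    have htr := wd_triangle hX g (w n) (w (n + k))
    rw [hdexact n, hdexact (n + k)] at htr
    omega
  have hdistfull : ∀ n m : ℕ, (wordDist X (w n) (w m) : ℤ) = |(n : ℤ) - (m : ℤ)| := by
    have key : ∀ n m : ℕ, n ≤ m → (wordDist X (w n) (w m) : ℤ) = |(n : ℤ) - (m : ℤ)| := by
      intro n m hnm
      obtain ⟨k, rfl⟩ := Nat.exists_eq_add_of_le hnm
      rw [hdist n k]
      have : (n : ℤ) - (n + k : ℕ) = -k := by push_cast; ring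
      rw [this, abs_neg, abs_of_nonneg (by positivity)]
    intro n m
    rcases le_total n m with h | h
    · exact key n m h
    · rw [wd_symm hX, key m n h, abs_sub_comm]
  have hpath : ∀ n, IsRPath X 1 P g (w n) := by
    intro n
    induction n with
    | zero =>
      exact ⟨[g], by simp, by simp, by simp [hw0], by simpa using hg, List.isChain_singleton _⟩
    | succ n ih =>
      obtain ⟨l, hlne, hhead, hlast, hmem, hch⟩ := ih
      refine ⟨l ++ [w (n + 1)], by simp, ?_, ?_, ?_, ?_⟩
      · rw [List.head?_append_of_ne_nil l hlne]; exact hhead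
      · simp
      · intro x hx
        rcases List.mem_append.mp hx with h | h
        · exact hmem x h
        · simp only [List.mem_singleton] at h
          exact h ▸ hwP (n + 1)
      · refine List.isChain_append.mpr ?_
        refine ⟨hch, List.isChain_singleton _, ?_⟩
        intro x hx y hy
        rw [hlast] at hx
        simp only [Option.mem_def, Option.some.injEq] at hx
        simp only [List.head?_cons, Option.mem_def, Option.some.injEq] at hy
        rw [← hx, ← hy]
        exact hd1 n
  refine ⟨⟨w, hw0, hwP, hdistfull⟩, ?_⟩
  refine Set.infinite_of_injective_forall_mem (f := fun n : ℕ => w n) ?_ ?_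
  · intro n m hnm
    have h0 : (wordDist X (w n) (w m) : ℤ) = 0 := by
      simp only at hnm
      rw [hnm, wd_self]; rfl
    have := hdistfull n m
    rw [h0] at this
    have h2 : (n : ℤ) = m := by
      have := abs_eq_zero.mp this.symm
      omega
    exact_mod_cast h2
  · intro n
    exact hpath n
end

section
/- Let G be a finitely generated group and φ : G → ℝ a nontrivial homomorphism such that the preimage φ⁻¹((0,∞)) is a connected subset of the Cayley graph of G. If the kernel of φ is left-orderable, then G admits a positive cone which is a connected subset of the Cayley graph. (In particular, a left-orderable finitely generated group with non-empty BNS-invariant Σ¹ admits a connected positive cone.) -/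
open scoped Pointwise

lemma wordLength_one' {G : Type*} [Group G] (X : Set G) : wordLength X 1 = 0 := by
  have h0 : 0 ∈ {n | ∃ l : List G, (∀ x ∈ l, x ∈ X) ∧ l.length = n ∧ l.prod = 1} :=
    ⟨[], by simp, rfl, rfl⟩
  exact Nat.eq_zero_of_le_zero (Nat.sInf_le h0)

lemma wordLength_mem' {G : Type*} [Group G] {X : Set G} {x : G} (hx : x ∈ X) :
    wordLength X x ≤ 1 :=
  Nat.sInf_le ⟨[x], by simpa using hx, rfl, by simp⟩

lemma isRPath_single' {G : Type*} [Group G] (X : Set G) (r : ℕ) {S : Set G} {a : G}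
    (ha : a ∈ S) : IsRPath X r S a a :=
  ⟨[a], by simp, rfl, rfl, by simpa using ha, by simp [List.Chain']⟩

lemma isRPath_pair' {G : Type*} [Group G] {X : Set G} {r : ℕ} {S : Set G} {a b : G}
    (ha : a ∈ S) (hb : b ∈ S) (hd : wordDist X a b ≤ r) : IsRPath X r S a b := by
  refine ⟨[a, b], by simp, rfl, rfl, ?_, ?_⟩
  · intro y hy
    simp only [List.mem_cons, List.not_mem_nil, or_false] at hy
    rcases hy with rfl | rfl
    · exact ha
    · exact hb
  · simpa [List.Chain'] using hd

lemma isRPath_mono' {G : Type*} [Group G] {X : Set G} {r : ℕ} {S T : Set G} {a b : G}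
    (hST : S ⊆ T) (h : IsRPath X r S a b) : IsRPath X r T a b := by
  obtain ⟨l, h1, h2, h3, h4, h5⟩ := h
  exact ⟨l, h1, h2, h3, fun x hx => hST (h4 x hx), h5⟩

lemma isRPath_trans' {G : Type*} [Group G] {X : Set G} {r : ℕ} {S : Set G} {a b c : G}
    (h1 : IsRPath X r S a b) (h2 : IsRPath X r S b c) : IsRPath X r S a c := by
  obtain ⟨l1, hl1ne, hh1, hg1, hs1, hc1⟩ := h1
  obtain ⟨l2, hl2ne, hh2, hg2, hs2, hc2⟩ := h2
  refine ⟨l1 ++ l2, by simp [hl1ne], ?_, ?_, ?_, ?_⟩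
  · simp [List.head?_append, hh1]
  · simp [List.getLast?_append, hg2]
  · intro x hx
    rcases List.mem_append.mp hx with h | h
    · exact hs1 x h
    · exact hs2 x h
  · simp only [List.Chain']
    rw [List.isChain_append]
    refine ⟨hc1, hc2, ?_⟩
    intro x hx y hy
    rw [hg1] at hx; rw [hh2] at hy
    cases hx; cases hy
    simp only [wordDist, inv_mul_cancel]
    rw [wordLength_one']
    exact Nat.zero_le r

/-- if `φ : G → ℝ` is a nontrivial homomorphism with
`φ⁻¹((0,∞))` connected in the Cayley graph, and `ker φ` is left-orderable, then
`G` admits a connected positive cone. -/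
theorem stmt_6 {G : Type*} [Group G] (X : Set G) (hX : IsGenSet X)
    (φ : G → ℝ) (hφ : ∀ a b : G, φ (a * b) = φ a + φ b)
    (hnt : ∃ g : G, φ g ≠ 0)
    (hconn : CoarselyConnectedWith X 1 {g : G | 0 < φ g})
    (PK : Set G) (hPK : IsPositiveConeOn {g : G | φ g = 0} PK) :
    ∃ P : Set G, IsPositiveCone P ∧ CoarselyConnectedWith X 1 P := by
  obtain ⟨hPKsub, hPKmul, hPKtri, hPKdisj, hPKone⟩ := hPK
  have h1 : φ 1 = 0 := by have := hφ 1 1; simp at this; linarith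
  have hinv : ∀ g : G, φ g⁻¹ = -φ g := by
    intro g; have := hφ g g⁻¹; simp [h1] at this; linarith
  -- there is a generator with positive φ
  have hex : ∃ x ∈ X, 0 < φ x := by
    by_contra h
    push_neg at h
    have hzero : ∀ x ∈ X, φ x = 0 := by
      intro x hx
      have h1' := h x hx
      have h2' := h x⁻¹ (hX.2.1 x hx)
      rw [hinv] at h2'
      linarith
    obtain ⟨g, hg⟩ := hnt
    apply hg
    have hg' : g ∈ Subgroup.closure X := hX.2.2 ▸ Subgroup.mem_top g
    refine Subgroup.closure_induction (fun x hx => hzero x hx) h1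
      (fun a b _ _ ha hb => by rw [hφ]; rw [ha, hb]; ring)
      (fun a _ ha => by rw [hinv, ha]; ring) hg'
  obtain ⟨x, hxX, hxpos⟩ := hex
  set P : Set G := {g : G | 0 < φ g} ∪ PK with hP
  have hsub : {g : G | 0 < φ g} ⊆ P := Set.subset_union_left
  have hPKφ : ∀ g ∈ PK, φ g = 0 := fun g hg => hPKsub hg
  refine ⟨P, ⟨?_, ?_, ?_, ?_⟩, ?_⟩
  · -- multiplicative
    rintro a (ha | ha) b (hb | hb)
    · left; show 0 < φ (a * b); rw [hφ]; exact add_pos ha hb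
    · left; show 0 < φ (a * b); rw [hφ, hPKφ b hb]; simpa using ha
    · left; show 0 < φ (a * b); rw [hφ, hPKφ a ha]; simpa using hb
    · right; exact hPKmul a ha b hb
  · -- trichotomy
    intro g
    rcases lt_trichotomy (φ g) 0 with h | h | h
    · right; left; left; show 0 < φ g⁻¹; rw [hinv]; linarith
    · rcases hPKtri g h with hg | hg | hg
      · exact Or.inl (Or.inr hg)
      · exact Or.inr (Or.inl (Or.inr hg))
      · exact Or.inr (Or.inr hg)
    · left; left; exact h
  · -- disjointness
    rintro g (hg | hg) (hg' | hg')
    · simp only [Set.mem_setOf_eq, hinv] at hg hg'; linarith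
    · have := hPKφ _ hg'; rw [hinv] at this
      simp only [Set.mem_setOf_eq] at hg; linarith
    · have := hPKφ _ hg
      simp only [Set.mem_setOf_eq, hinv, this] at hg'; linarith
    · exact hPKdisj g hg hg'
  · -- 1 ∉ P
    rintro (h | h)
    · simp only [Set.mem_setOf_eq, h1] at h; linarith
    · exact hPKone h
  · -- coarse connectivity
    have hstep : ∀ a ∈ PK, IsRPath X 1 P a (a * x) ∧ IsRPath X 1 P (a * x) a := by
      intro a ha
      have haP : a ∈ P := Or.inr ha
      have haxP : a * x ∈ P := by
        left; show 0 < φ (a * x); rw [hφ, hPKφ a ha]; simpa using hxpos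
      have hd1 : wordDist X a (a * x) ≤ 1 := by
        show wordLength X (a⁻¹ * (a * x)) ≤ 1
        rw [inv_mul_cancel_left]
        exact wordLength_mem' hxX
      have hd2 : wordDist X (a * x) a ≤ 1 := by
        show wordLength X ((a * x)⁻¹ * a) ≤ 1
        have : (a * x)⁻¹ * a = x⁻¹ := by group
        rw [this]
        exact wordLength_mem' (hX.2.1 x hxX)
      exact ⟨isRPath_pair' haP haxP hd1, isRPath_pair' haxP haP hd2⟩
    -- representative in the positive part
    have hrep : ∀ a ∈ P, ∃ a' : G, 0 < φ a' ∧
        IsRPath X 1 P a a' ∧ IsRPath X 1 P a' a := by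
      rintro a (ha | ha)
      · exact ⟨a, ha, isRPath_single' X 1 (Or.inl ha), isRPath_single' X 1 (Or.inl ha)⟩
      · obtain ⟨p1, p2⟩ := hstep a ha
        refine ⟨a * x, ?_, p1, p2⟩
        rw [hφ, hPKφ a ha]; simpa using hxpos
    intro a ha b hb
    obtain ⟨a', ha', pa1, _⟩ := hrep a ha
    obtain ⟨b', hb', _, pb2⟩ := hrep b hb
    have hmid : IsRPath X 1 P a' b' :=
      isRPath_mono' hsub (hconn a' ha' b' hb')
    exact isRPath_trans' (isRPath_trans' pa1 hmid) pb2
end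

section
/- If P is a positive cone of a group G that is finitely generated as a sub-semigroup, and X is any finite symmetric generating set of G, then P is a coarsely connected subset of the Cayley graph Γ(G,X): there exists r ≥ 1 such that any two elements of P are joined by an r-path supported in P. -/
open scoped Pointwise

section Aux

variable {G : Type*} [Group G]

lemma exists_rep (X : Set G) (hX : IsGenSet X) (g : G) :
    ∃ l : List G, (∀ x ∈ l, x ∈ X) ∧ l.prod = g := by
  have hg : g ∈ Subgroup.closure X := by rw [hX.2.2]; trivial
  induction hg using Subgroup.closure_induction with
  | mem x hx => exact ⟨[x], by simpa using hx, by simp⟩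
  | one => exact ⟨[], by simp, by simp⟩
  | mul x y _ _ ihx ihy =>
    obtain ⟨l₁, h₁, p₁⟩ := ihx
    obtain ⟨l₂, h₂, p₂⟩ := ihy
    refine ⟨l₁ ++ l₂, ?_, by simp [p₁, p₂]⟩
    intro z hz
    rcases List.mem_append.mp hz with h | h
    · exact h₁ z h
    · exact h₂ z h
  | inv x _ ihx =>
    obtain ⟨l, hl, pl⟩ := ihx
    refine ⟨(l.map (·⁻¹)).reverse, ?_, ?_⟩
    · intro z hz
      simp only [List.mem_reverse, List.mem_map] at hz
      obtain ⟨w, hw, rfl⟩ := hz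
      exact hX.2.1 w (hl w hw)
    · rw [← pl, ← List.prod_inv_reverse]

lemma wordLength_inv_le (X : Set G) (hX : IsGenSet X) (g : G) :
    wordLength X g⁻¹ ≤ wordLength X g := by
  have hne : {n | ∃ l : List G, (∀ x ∈ l, x ∈ X) ∧ l.length = n ∧ l.prod = g}.Nonempty := by
    obtain ⟨l, hl, pl⟩ := exists_rep X hX g
    exact ⟨l.length, l, hl, rfl, pl⟩
  obtain ⟨l, hl, hlen, hprod⟩ := Nat.sInf_mem hne
  apply Nat.sInf_le
  refine ⟨(l.map (·⁻¹)).reverse, ?_, by simpa [wordLength] using hlen, ?_⟩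
  · intro z hz
    simp only [List.mem_reverse, List.mem_map] at hz
    obtain ⟨w, hw, rfl⟩ := hz
    exact hX.2.1 w (hl w hw)
  · rw [← List.prod_inv_reverse, hprod]

lemma wordDist_mul_right (X : Set G) (a s : G) :
    wordDist X a (a * s) = wordLength X s := by
  simp [wordDist]

lemma forward_path (X : Set G) (r : ℕ) (P : Set G)
    (hmul : ∀ a ∈ P, ∀ b ∈ P, a * b ∈ P) (S : Finset G)
    (hSP : ∀ s ∈ S, s ∈ P) (hr : ∀ s ∈ S, wordLength X s ≤ r) :
    ∀ (l : List G) (a : G), a ∈ P → (∀ x ∈ l, x ∈ S) →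
      IsRPath X r P a (a * l.prod) := by
  intro l
  induction l with
  | nil =>
    intro a ha _
    exact ⟨[a], by simp, by simp, by simp, by simpa using ha, by exact List.isChain_singleton a⟩
  | cons s t ih =>
    intro a ha hmem
    have hsS : s ∈ S := hmem s List.mem_cons_self
    have has : a * s ∈ P := hmul a ha s (hSP s hsS)
    obtain ⟨l', hne, hh, hl, hm, hch⟩ :=
      ih (a * s) has (fun x hx => hmem x (List.mem_cons_of_mem s hx))
    cases l' with
    | nil => exact absurd rfl hne
    | cons h t' =>
      have hh' : h = a * s := by simpa using hh
      refine ⟨a :: h :: t', by simp, by simp, ?_, ?_, ?_⟩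
      · rw [List.getLast?_cons_cons, hl, List.prod_cons, mul_assoc]
      · intro x hx
        rcases List.mem_cons.mp hx with rfl | hx
        · exact ha
        · exact hm x hx
      · rw [List.Chain', List.isChain_cons_cons]
        refine ⟨?_, hch⟩
        rw [hh', wordDist_mul_right]
        exact hr s hsS

lemma rpath_symm (X : Set G) (hX : IsGenSet X) (r : ℕ) (P : Set G) {a b : G}
    (h : IsRPath X r P a b) : IsRPath X r P b a := by
  obtain ⟨l, hne, hh, hl, hm, hch⟩ := h
  refine ⟨l.reverse, by simpa using hne, by simpa using hl, by simpa using hh,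
    fun x hx => hm x (List.mem_reverse.mp hx), ?_⟩
  rw [List.Chain', List.isChain_reverse]
  refine hch.imp ?_
  intro u v huv
  have : wordDist X v u = wordLength X (u⁻¹ * v)⁻¹ := by
    simp [wordDist, mul_inv_rev]
  calc wordDist X v u = wordLength X (u⁻¹ * v)⁻¹ := this
    _ ≤ wordLength X (u⁻¹ * v) := wordLength_inv_le X hX _
    _ ≤ r := huv

end Aux

/-- a positive cone that is finitely generated as a sub-semigroup
is coarsely connected in any Cayley graph. -/
theorem stmt_8 {G : Type*} [Group G] (X : Set G) (hX : IsGenSet X)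
    (P : Set G) (hP : IsPositiveCone P)
    (S : Finset G) (hS : P = SemigroupClosure (S : Set G)) :
    ∃ r : ℕ, 1 ≤ r ∧ CoarselyConnectedWith X r P := by
  set r : ℕ := S.sup (wordLength X) + 1 with hr_def
  have hr : ∀ s ∈ S, wordLength X s ≤ r :=
    fun s hs => le_trans (Finset.le_sup hs) (Nat.le_succ _)
  have hSP : ∀ s ∈ S, s ∈ P := by
    intro s hs
    rw [hS]
    exact ⟨[s], by simp, by simpa using hs, by simp⟩
  refine ⟨r, Nat.le_add_left 1 _, ?_⟩
  intro a ha b hb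
  rcases hP.2.1 (a⁻¹ * b) with h | h | h
  · rw [hS] at h
    obtain ⟨l, _, hmem, hprod⟩ := h
    have := forward_path X r P hP.1 S hSP hr l a ha hmem
    rwa [hprod, mul_inv_cancel_left] at this
  · have h' : b⁻¹ * a ∈ P := by rwa [mul_inv_rev, inv_inv] at h
    rw [hS] at h'
    obtain ⟨l, _, hmem, hprod⟩ := h'
    have := forward_path X r P hP.1 S hSP hr l b hb hmem
    rw [hprod, mul_inv_cancel_left] at this
    exact rpath_symm X hX r P this
  · have hab : a = b := by
      have h2 : a⁻¹ = b⁻¹ := mul_eq_one_iff_eq_inv.mp h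
      exact inv_injective h2
    subst hab
    exact ⟨[a], by simp, by simp, by simp, by simpa using ha, by exact List.isChain_singleton a⟩
end

section
/- Every positive cone of ℤⁿ is a coarsely connected subset of the Cayley graph of ℤⁿ with respect to the standard generators; that is, finitely generated free abelian groups are Prieto. -/
/-- ℓ¹ distance on `ℤⁿ` (the word metric for the standard generators). -/
def l1dist {n : ℕ} (x y : Fin n → ℤ) : ℕ := ∑ i, (x i - y i).natAbs

/-- A positive cone of the additive group `ℤⁿ`. -/
def IsPositiveConeAdd {n : ℕ} (P : Set (Fin n → ℤ)) : Prop :=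
  (∀ a ∈ P, ∀ b ∈ P, a + b ∈ P) ∧ (∀ g : Fin n → ℤ, g ∈ P ∨ -g ∈ P ∨ g = 0) ∧
  (∀ g ∈ P, -g ∉ P) ∧ (0 : Fin n → ℤ) ∉ P

lemma l1dist_self {n : ℕ} (x : Fin n → ℤ) : l1dist x x = 0 := by
  simp [l1dist]

lemma l1dist_comm {n : ℕ} (x y : Fin n → ℤ) : l1dist x y = l1dist y x := by
  unfold l1dist
  refine Finset.sum_congr rfl fun i _ => ?_
  rw [← Int.natAbs_neg, neg_sub]

lemma l1dist_add_single {n : ℕ} (x : Fin n → ℤ) (i : Fin n) (c : ℤ) :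
    l1dist x (x + c • Pi.single i 1) = c.natAbs := by
  unfold l1dist
  have h : ∀ j, (x j - (x + c • (Pi.single i 1 : Fin n → ℤ)) j).natAbs
      = if j = i then c.natAbs else 0 := by
    intro j
    by_cases hj : j = i
    · subst hj; simp [Pi.single_apply]
    · simp [Pi.single_apply, hj]
  rw [Finset.sum_congr rfl fun j _ => h j]
  simp

/-- Walking up from `a` by a list of steps, all in `P`, gives a good chain. -/
lemma path_up {n : ℕ} (P : Set (Fin n → ℤ))
    (hadd : ∀ a ∈ P, ∀ b ∈ P, a + b ∈ P)
    (L : List (Fin n → ℤ)) (hL : ∀ s ∈ L, s ∈ P ∧ ∀ x, l1dist x (x + s) ≤ 1) :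
    ∀ a ∈ P, ∃ l : List (Fin n → ℤ), l ≠ [] ∧ l.head? = some a ∧
      l.getLast? = some (a + L.sum) ∧ (∀ x ∈ l, x ∈ P) ∧
      l.Chain' (fun u v => l1dist u v ≤ 1) := by
  induction L with
  | nil =>
    intro a ha
    exact ⟨[a], by simp, rfl, by simp, by simpa using ha, List.isChain_singleton a⟩
  | cons s L ih =>
    intro a ha
    have hs := hL s (by simp)
    have has : a + s ∈ P := hadd a ha s hs.1
    obtain ⟨l, hne, hhead, hlast, hmem, hchain⟩ :=
      ih (fun t ht => hL t (by simp [ht])) (a + s) has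
    refine ⟨a :: l, by simp, by simp, ?_, ?_, ?_⟩
    · rw [List.getLast?_cons, hlast, List.sum_cons, add_assoc]
      rfl
    · intro x hx
      rcases List.mem_cons.1 hx with h | h
      · exact h ▸ ha
      · exact hmem x h
    · refine List.isChain_cons.mpr ?_
      refine ⟨fun y hy => ?_, hchain⟩
      rw [hhead, Option.mem_some_iff] at hy
      subst hy
      exact hs.2 a

/-- every positive cone of `ℤⁿ` is coarsely connected with respect
to the ℓ¹ word metric coming from the standard generators (ℤⁿ is Prieto). -/
theorem stmt_9 {n : ℕ} (P : Set (Fin n → ℤ)) (hP : IsPositiveConeAdd P) :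
    ∃ r : ℕ, 1 ≤ r ∧ ∀ a ∈ P, ∀ b ∈ P,
      ∃ l : List (Fin n → ℤ), l ≠ [] ∧ l.head? = some a ∧ l.getLast? = some b ∧
        (∀ x ∈ l, x ∈ P) ∧ l.Chain' (fun u v => l1dist u v ≤ r) := by
  classical
  obtain ⟨hadd, htri, -, h0⟩ := hP
  refine ⟨1, le_refl 1, fun a ha b hb => ?_⟩
  -- choose a generator ±eᵢ in P for each coordinate
  have hgen : ∀ i : Fin n, (Pi.single i 1 : Fin n → ℤ) ∈ P ∨
      (-(Pi.single i 1) : Fin n → ℤ) ∈ P := by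
    intro i
    rcases htri (Pi.single i 1) with h | h | h
    · exact Or.inl h
    · exact Or.inr h
    · exfalso
      have := congrFun h i
      simp at this
  set s : Fin n → (Fin n → ℤ) :=
    fun i => if (Pi.single i 1 : Fin n → ℤ) ∈ P then Pi.single i 1
      else -(Pi.single i 1) with hs_def
  have hsP : ∀ i, s i ∈ P := by
    intro i
    simp only [hs_def]
    split_ifs with h
    · exact h
    · rcases hgen i with h' | h'
      · exact absurd h' h
      · exact h' 
  -- signed coefficients: c i • s i = (b i - a i) • eᵢ
  set c : Fin n → ℤ := fun i =>
    if (Pi.single i 1 : Fin n → ℤ) ∈ P then b i - a i else -(b i - a i) with hc_def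
  have hcs : ∀ i, c i • s i = (b i - a i) • Pi.single i 1 := by
    intro i
    simp only [hc_def, hs_def]
    split_ifs with h
    · rfl
    · rw [neg_smul_neg]
  -- each step has ℓ¹ length 1
  have hstep : ∀ i, ∀ x : Fin n → ℤ, l1dist x (x + s i) ≤ 1 := by
    intro i x
    have h1 : s i = (1 : ℤ) • Pi.single i 1 ∨ s i = (-1 : ℤ) • Pi.single i 1 := by
      simp only [hs_def]
      split_ifs with h
      · left; rw [one_smul]
      · right; rw [neg_one_smul]
    rcases h1 with h | h <;> rw [h, l1dist_add_single] <;> simp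
  -- the step lists
  set Lx : List (Fin n → ℤ) :=
    (List.finRange n).flatMap (fun i => List.replicate (c i).toNat (s i)) with hLx
  set Ly : List (Fin n → ℤ) :=
    (List.finRange n).flatMap (fun i => List.replicate (-(c i)).toNat (s i)) with hLy
  have hsum : ∀ d : Fin n → ℤ,
      ((List.finRange n).flatMap (fun i => List.replicate (d i).toNat (s i))).sum
        = ∑ i, ((d i).toNat : ℤ) • s i := by
    intro d
    rw [Fin.sum_univ_def]
    induction List.finRange n with
    | nil => simp
    | cons i L ih => simp [List.flatMap_cons, ih, natCast_zsmul, -Int.ofNat_toNat]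
  have hLmem : ∀ (d : Fin n → ℤ), ∀ t ∈ (List.finRange n).flatMap
      (fun i => List.replicate (d i).toNat (s i)), t ∈ P ∧ ∀ x, l1dist x (x + t) ≤ 1 := by
    intro d t ht
    rw [List.mem_flatMap] at ht
    obtain ⟨i, -, hti⟩ := ht
    rw [List.eq_of_mem_replicate hti]
    exact ⟨hsP i, hstep i⟩
  -- meeting point: a + Lx.sum = b + Ly.sum
  have hmeet : a + Lx.sum = b + Ly.sum := by
    rw [hLx, hLy, hsum, hsum]
    have key : ∑ i, ((c i).toNat : ℤ) • s i - ∑ i, (((-(c i)).toNat : ℤ)) • s i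
        = b - a := by
      rw [← Finset.sum_sub_distrib]
      have : ∀ i ∈ Finset.univ, ((c i).toNat : ℤ) • s i - ((-(c i)).toNat : ℤ) • s i
          = (b i - a i) • Pi.single i 1 := by
        intro i _
        rw [← sub_smul, Int.toNat_sub_toNat_neg, hcs]
      rw [Finset.sum_congr rfl this]
      have := Finset.univ_sum_single (fun i => b i - a i)
      calc ∑ i, (b i - a i) • Pi.single i 1
          = ∑ i, Pi.single i (b i - a i) := by
            refine Finset.sum_congr rfl fun i _ => ?_
            ext j
            by_cases h : j = i <;> simp [h, Pi.single_apply]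
        _ = b - a := by rw [Finset.univ_sum_single (fun i => b i - a i)]; ext j; simp
    linear_combination (norm := abel) key
  obtain ⟨lx, hxne, hxhead, hxlast, hxmem, hxchain⟩ :=
    path_up P hadd Lx (hLmem _) a ha
  obtain ⟨ly, hyne, hyhead, hylast, hymem, hychain⟩ :=
    path_up P hadd Ly (hLmem _) b hb
  refine ⟨lx ++ ly.reverse, by simp [hxne], ?_, ?_, ?_, ?_⟩
  · rw [List.head?_append, hxhead]
    rfl
  · rw [List.getLast?_append, List.getLast?_reverse, hyhead]
    simp
  · intro x hx
    rcases List.mem_append.1 hx with h | h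
    · exact hxmem x h
    · exact hymem x (List.mem_reverse.1 h)
  · refine List.IsChain.append hxchain ?_ ?_
    · rw [List.isChain_reverse]
      refine hychain.imp ?_
      intro u v h
      show l1dist v u ≤ 1
      rw [l1dist_comm]
      exact h
    · intro x hx y hy
      rw [hxlast, Option.mem_some_iff] at hx
      rw [List.head?_reverse, hylast, Option.mem_some_iff] at hy
      subst hx; subst hy
      rw [← hmeet, l1dist_self]
      exact Nat.zero_le 1
end

section
/- In any left-invariant total order on the iterated torus knot group T_{n₁,…,n_k} = ⟨a₁,…,a_k | a₁^{n₁} = a₂^{n₂} = ⋯ = a_k^{n_k}⟩ (with all n_i ≥ 2), the central element z = a₁^{n₁} is cofinal: for every g in the group there exist integers m₁, m₂ with z^{m₁} ≺ g ≺ z^{m₂}. -/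
section Aux

variable {G : Type*} [Group G]

lemma aux_pow_step (r : G → G → Prop) (hleft : ∀ g a b, r a b → r (g * a) (g * b))
    (c : G) (h1 : r 1 c) (m : ℕ) : r (c ^ m) (c ^ (m + 1)) := by
  have := hleft (c ^ m) 1 c h1
  simpa [pow_succ] using this

lemma aux_pow_lt (r : G → G → Prop) (htrans : ∀ a b c, r a b → r b c → r a c)
    (hleft : ∀ g a b, r a b → r (g * a) (g * b)) (c : G) (h1 : r 1 c) :
    ∀ m m' : ℕ, m < m' → r (c ^ m) (c ^ m') := by
  intro m m' h
  obtain ⟨d, rfl⟩ : ∃ d, m' = m + 1 + d := ⟨m' - (m + 1), by omega⟩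
  clear h
  induction d with
  | zero => simpa using aux_pow_step r hleft c h1 m
  | succ d ih =>
      have h2 : r (c ^ (m + 1 + d)) (c ^ (m + 1 + d + 1)) := aux_pow_step r hleft c h1 _
      have h3 : m + 1 + (d + 1) = m + 1 + d + 1 := by omega
      rw [h3]
      exact htrans _ _ _ ih h2

lemma aux_one_lt_pow (r : G → G → Prop) (htrans : ∀ a b c, r a b → r b c → r a c)
    (hleft : ∀ g a b, r a b → r (g * a) (g * b)) (c : G) (h1 : r 1 c)
    (m : ℕ) (hm : 1 ≤ m) : r 1 (c ^ m) := by
  have := aux_pow_lt r htrans hleft c h1 0 m hm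
  simpa using this

lemma aux_pow_mono_left (r : G → G → Prop) (htrans : ∀ a b c, r a b → r b c → r a c)
    (hleft : ∀ g a b, r a b → r (g * a) (g * b))
    (c x : G) (hc : ∀ g, c * g = g * c) (hxc : r x c) :
    ∀ m : ℕ, 1 ≤ m → r (x ^ m) (c ^ m) := by
  intro m hm
  induction m with
  | zero => omega
  | succ m ih =>
      rcases Nat.eq_or_lt_of_le hm with h | h
      · simpa [← h] using hxc
      · have hm1 : 1 ≤ m := by omega
        have h1 : r (x * x ^ m) (x * c ^ m) := hleft x _ _ (ih hm1)
        have hcomm : x * c ^ m = c ^ m * x := by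
          have hcx : Commute c x := hc x
          exact (hcx.pow_left m).symm.eq
        rw [hcomm] at h1
        have h2 : r (c ^ m * x) (c ^ m * c) := hleft (c ^ m) _ _ hxc
        have := htrans _ _ _ h1 h2
        rw [pow_succ' x m, pow_succ c m]
        exact this

lemma aux_pow_mono_right (r : G → G → Prop) (htrans : ∀ a b c, r a b → r b c → r a c)
    (hleft : ∀ g a b, r a b → r (g * a) (g * b))
    (c x : G) (hc : ∀ g, c * g = g * c) (hcx : r c x) :
    ∀ m : ℕ, 1 ≤ m → r (c ^ m) (x ^ m) := by
  intro m hm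
  induction m with
  | zero => omega
  | succ m ih =>
      rcases Nat.eq_or_lt_of_le hm with h | h
      · simpa [← h] using hcx
      · have hm1 : 1 ≤ m := by omega
        have h1 : r (c * c ^ m) (c * x ^ m) := hleft c _ _ (ih hm1)
        rw [hc (x ^ m)] at h1
        have h2 : r (x ^ m * c) (x ^ m * x) := hleft (x ^ m) _ _ hcx
        have := htrans _ _ _ h1 h2
        rw [pow_succ' c m, pow_succ x m]
        exact this

end Aux

section Aux2

variable {G : Type*} [Group G]

lemma aux_gen_bound (r : G → G → Prop)
    (hirr : ∀ a, ¬ r a a) (htrans : ∀ a b c, r a b → r b c → r a c)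
    (htri : ∀ a b, r a b ∨ a = b ∨ r b a) (hleft : ∀ g a b, r a b → r (g * a) (g * b))
    (c a : G) (n : ℕ) (hn : 2 ≤ n) (hc : ∀ g, c * g = g * c) (h1 : r 1 c)
    (ha : a ^ n = c ∨ a ^ n = c⁻¹) : r c⁻¹ a ∧ r a c := by
  have hn1 : 1 ≤ n := by omega
  have hc_pow : r c (c ^ n) := by
    have := aux_pow_lt r htrans hleft c h1 1 n hn
    simpa using this
  have hpos : r 1 (c ^ n) := aux_one_lt_pow r htrans hleft c h1 n hn1
  have hinv1 : r c⁻¹ 1 := by have := hleft c⁻¹ 1 c h1; simpa using this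
  have hinvc : r c⁻¹ c := htrans _ _ _ hinv1 h1
  have hninv1 : r ((c ^ n)⁻¹) 1 := by
    have := hleft (c ^ n)⁻¹ 1 (c ^ n) hpos; simpa using this
  have hninvc : r ((c ^ n)⁻¹) c := htrans _ _ _ hninv1 h1
  have hninvinv : r ((c ^ n)⁻¹) c⁻¹ := by
    have h := hleft (c⁻¹ * (c ^ n)⁻¹) c (c ^ n) hc_pow
    have e1 : c⁻¹ * (c ^ n)⁻¹ * c = (c ^ n)⁻¹ := by group
    have e2 : c⁻¹ * (c ^ n)⁻¹ * c ^ n = c⁻¹ := by group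
    rwa [e1, e2] at h
  have hcinv : ∀ g, c⁻¹ * g = g * c⁻¹ := by
    intro g
    have hcg : Commute c g := hc g
    exact hcg.inv_left.eq
  rcases ha with hcase | hcase
  · constructor
    · rcases htri c⁻¹ a with h | h | h
      · exact h
      · exfalso
        rw [← h] at hcase
        have e : (c ^ n)⁻¹ = c := by rw [← inv_pow]; exact hcase
        rw [e] at hninvc
        exact hirr c hninvc
      · exfalso
        have hm := aux_pow_mono_left r htrans hleft c⁻¹ a hcinv h n hn1
        rw [hcase, inv_pow] at hm
        exact hirr c (htrans _ _ _ hm hninvc)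
    · rcases htri a c with h | h | h
      · exact h
      · exfalso
        rw [h] at hcase
        rw [hcase] at hc_pow
        exact hirr c hc_pow
      · exfalso
        have hm := aux_pow_mono_right r htrans hleft c a hc h n hn1
        rw [hcase] at hm
        exact hirr c (htrans _ _ _ hc_pow hm)
  · constructor
    · rcases htri c⁻¹ a with h | h | h
      · exact h
      · exfalso
        rw [← h] at hcase
        have e : (c ^ n)⁻¹ = c⁻¹ := by rw [← inv_pow]; exact hcase
        have e2 : c ^ n = c := inv_injective e
        rw [e2] at hc_pow
        exact hirr c hc_pow
      · exfalso
        have hm := aux_pow_mono_left r htrans hleft c⁻¹ a hcinv h n hn1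
        rw [hcase, inv_pow] at hm
        exact hirr c⁻¹ (htrans _ _ _ hm hninvinv)
    · rcases htri a c with h | h | h
      · exact h
      · exfalso
        rw [h] at hcase
        rw [hcase] at hc_pow
        exact hirr c (htrans _ _ _ hc_pow hinvc)
      · exfalso
        have hm := aux_pow_mono_right r htrans hleft c a hc h n hn1
        rw [hcase] at hm
        have := htrans _ _ _ hc_pow hm
        exact hirr c (htrans _ _ _ this hinvc)

end Aux2

lemma aux_master {α : Type*} (rels : Set (FreeGroup α))
    (r : PresentedGroup rels → PresentedGroup rels → Prop)
    (hirr : ∀ a, ¬ r a a) (htrans : ∀ a b c, r a b → r b c → r a c)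
    (htri : ∀ a b, r a b ∨ a = b ∨ r b a) (hleft : ∀ g a b, r a b → r (g * a) (g * b))
    (n : α → ℕ) (hn : ∀ i, 2 ≤ n i)
    (c : PresentedGroup rels) (hc : ∀ g, c * g = g * c) (h1 : r 1 c)
    (hgen : ∀ i, (PresentedGroup.of i : PresentedGroup rels) ^ n i = c ∨
      (PresentedGroup.of i : PresentedGroup rels) ^ n i = c⁻¹) :
    ∀ g : PresentedGroup rels, ∃ m : ℕ, r (c⁻¹ ^ m) g ∧ r g (c ^ m) := by
  have hinv1 : r c⁻¹ 1 := by have := hleft c⁻¹ 1 c h1; simpa using this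
  intro g
  obtain ⟨w, rfl⟩ := PresentedGroup.mk_surjective rels g
  induction w using FreeGroup.induction_on with
  | C1 =>
      refine ⟨1, ?_, ?_⟩
      · simpa using hinv1
      · simpa using h1
  | of x =>
      refine ⟨1, ?_, ?_⟩
      · have := (aux_gen_bound r hirr htrans htri hleft c (PresentedGroup.of x) (n x)
          (hn x) hc h1 (hgen x)).1
        rw [pow_one]; exact this
      · have := (aux_gen_bound r hirr htrans htri hleft c (PresentedGroup.of x) (n x)
          (hn x) hc h1 (hgen x)).2
        rw [pow_one]; exact this
  | inv_of x _ =>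
      have hinvgen : ((PresentedGroup.of x : PresentedGroup rels)⁻¹) ^ n x = c ∨
          ((PresentedGroup.of x : PresentedGroup rels)⁻¹) ^ n x = c⁻¹ := by
        rcases hgen x with h | h
        · right; rw [inv_pow, h]
        · left; rw [inv_pow, h, inv_inv]
      have hb := aux_gen_bound r hirr htrans htri hleft c
        ((PresentedGroup.of x : PresentedGroup rels)⁻¹) (n x) (hn x) hc h1 hinvgen
      refine ⟨1, ?_, ?_⟩
      · have := hb.1
        rw [pow_one]
        rw [map_inv]
        exact this
      · have := hb.2
        rw [pow_one]
        rw [map_inv]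
        exact this
  | mul x y ihx ihy =>
      obtain ⟨mx, lx, ux⟩ := ihx
      obtain ⟨my, ly, uy⟩ := ihy
      set X := PresentedGroup.mk rels x with hX
      set Y := PresentedGroup.mk rels y with hY
      refine ⟨mx + my, ?_, ?_⟩
      · have h1' : r (c⁻¹ ^ my * c⁻¹ ^ mx) (c⁻¹ ^ my * X) := hleft _ _ _ lx
        have hcm : c⁻¹ ^ my * X = X * c⁻¹ ^ my := by
          have hcx : Commute c X := hc X
          exact (hcx.inv_left.pow_left my).eq
        rw [hcm] at h1'
        have h2' : r (X * c⁻¹ ^ my) (X * Y) := hleft X _ _ ly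
        have h3' := htrans _ _ _ h1' h2'
        rw [map_mul, show mx + my = my + mx from Nat.add_comm mx my, pow_add]
        exact h3'
      · have u1 : r (X * Y) (X * c ^ my) := hleft X _ _ uy
        have hcm : X * c ^ my = c ^ my * X := by
          have hcx : Commute c X := hc X
          exact ((hcx.pow_left my).symm).eq
        rw [hcm] at u1
        have u2 : r (c ^ my * X) (c ^ my * c ^ mx) := hleft _ _ _ ux
        have u3 := htrans _ _ _ u1 u2
        rw [map_mul, show mx + my = my + mx from Nat.add_comm mx my, pow_add]
        exact u3

/-- in any left-invariant total order on the iterated torus knot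
group `T_{n₁,…,n_k} = ⟨a₁,…,a_k ∣ a₁^{n₁} = ⋯ = a_k^{n_k}⟩` (all `n_i ≥ 2`),
the central element `z = a₁^{n₁}` is cofinal. -/
theorem stmt_11 (k : ℕ) (hk : 0 < k) (n : Fin k → ℕ) (hn : ∀ i, 2 ≤ n i)
    (rels : Set (FreeGroup (Fin k)))
    (hrels : rels = {w : FreeGroup (Fin k) | ∃ i j : Fin k,
      w = FreeGroup.of i ^ n i * (FreeGroup.of j ^ n j)⁻¹})
    (r : PresentedGroup rels → PresentedGroup rels → Prop)
    (hirr : ∀ a, ¬ r a a)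
    (htrans : ∀ a b c, r a b → r b c → r a c)
    (htri : ∀ a b, r a b ∨ a = b ∨ r b a)
    (hleft : ∀ g a b, r a b → r (g * a) (g * b)) :
    ∀ g : PresentedGroup rels, ∃ m₁ m₂ : ℤ,
      r (((PresentedGroup.of (⟨0, hk⟩ : Fin k)) ^ n ⟨0, hk⟩) ^ m₁) g ∧
      r g (((PresentedGroup.of (⟨0, hk⟩ : Fin k)) ^ n ⟨0, hk⟩) ^ m₂) := by
  intro g
  set i0 : Fin k := ⟨0, hk⟩ with hi0
  set z : PresentedGroup rels := PresentedGroup.of i0 ^ n i0 with hzdef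
  -- the defining relations hold in the presented group
  have rel_eq : ∀ i j : Fin k, (PresentedGroup.of i : PresentedGroup rels) ^ n i =
      (PresentedGroup.of j : PresentedGroup rels) ^ n j := by
    intro i j
    have hmem : FreeGroup.of i ^ n i * (FreeGroup.of j ^ n j)⁻¹ ∈ Subgroup.normalClosure rels :=
      Subgroup.subset_normalClosure (by rw [hrels]; exact ⟨i, j, rfl⟩)
    have h1 : PresentedGroup.mk rels (FreeGroup.of i ^ n i * (FreeGroup.of j ^ n j)⁻¹) = 1 :=
      (QuotientGroup.eq_one_iff _).2 hmem
    rw [map_mul, map_inv, map_pow, map_pow] at h1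
    exact mul_inv_eq_one.mp h1
  -- z is central
  have hzcomm : ∀ g : PresentedGroup rels, z * g = g * z := by
    intro g
    have hg : g ∈ Subgroup.centralizer {z} := by
      refine PresentedGroup.generated_by rels _ (fun j => ?_) g
      rw [Subgroup.mem_centralizer_iff]
      rintro x hx
      rw [Set.mem_singleton_iff] at hx
      subst hx
      rw [show z = PresentedGroup.of j ^ n j from rel_eq i0 j]
      exact pow_mul_comm' (PresentedGroup.of j) (n j)
    exact Subgroup.mem_centralizer_iff.mp hg z (Set.mem_singleton z)
  -- z ≠ 1 via a homomorphism to Multiplicative ℤ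
  have hz_ne : z ≠ 1 := by
    set N : ℕ := Finset.univ.prod n with hN
    have hNpos : 0 < N := Finset.prod_pos (fun i _ => by have := hn i; omega)
    set f : Fin k → Multiplicative ℤ :=
      fun i => Multiplicative.ofAdd ((N / n i : ℕ) : ℤ) with hf
    have key : ∀ i, f i ^ n i = Multiplicative.ofAdd ((N : ℤ)) := by
      intro i
      have hdvd : n i ∣ N := Finset.dvd_prod_of_mem n (Finset.mem_univ i)
      have hmul : n i * (N / n i) = N := Nat.mul_div_cancel' hdvd
      rw [hf, ← ofAdd_nsmul]
      congr 1
      rw [nsmul_eq_mul]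
      exact_mod_cast congrArg (Nat.cast : ℕ → ℤ) hmul
    have hrelmap : ∀ w ∈ rels, FreeGroup.lift f w = 1 := by
      intro w hw
      rw [hrels] at hw
      obtain ⟨i, j, rfl⟩ := hw
      rw [map_mul, map_inv, map_pow, map_pow, FreeGroup.lift_apply_of, FreeGroup.lift_apply_of,
        key i, key j, mul_inv_cancel]
    intro hz1
    have hφz : PresentedGroup.toGroup hrelmap z = Multiplicative.ofAdd ((N : ℤ)) := by
      rw [hzdef, map_pow, PresentedGroup.toGroup.of]
      exact key i0
    rw [hz1, map_one] at hφz
    have : (N : ℤ) = 0 := by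
      have := hφz.symm
      rwa [← ofAdd_zero, Multiplicative.ofAdd.injective.eq_iff] at this
    omega
  rcases htri 1 z with hpos | heq | hneg
  · -- 1 ≺ z : use c = z
    have hgen : ∀ i, (PresentedGroup.of i : PresentedGroup rels) ^ n i = z ∨
        (PresentedGroup.of i : PresentedGroup rels) ^ n i = z⁻¹ :=
      fun i => Or.inl (rel_eq i i0)
    obtain ⟨m, hl, hu⟩ := aux_master rels r hirr htrans htri hleft n hn z hzcomm hpos hgen g
    refine ⟨-(m : ℤ), (m : ℤ), ?_, ?_⟩
    · rw [zpow_neg, zpow_natCast, ← inv_pow]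
      exact hl
    · rw [zpow_natCast]
      exact hu
  · exact absurd heq.symm hz_ne
  · -- z ≺ 1 : use c = z⁻¹
    have h1c : r 1 z⁻¹ := by
      have := hleft z⁻¹ z 1 hneg
      simpa using this
    have hcinv : ∀ g : PresentedGroup rels, z⁻¹ * g = g * z⁻¹ := by
      intro g
      have hcg : Commute z g := hzcomm g
      exact hcg.inv_left.eq
    have hgen : ∀ i, (PresentedGroup.of i : PresentedGroup rels) ^ n i = z⁻¹ ∨
        (PresentedGroup.of i : PresentedGroup rels) ^ n i = (z⁻¹)⁻¹ :=
      fun i => Or.inr (by rw [inv_inv]; exact rel_eq i i0)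
    obtain ⟨m, hl, hu⟩ := aux_master rels r hirr htrans htri hleft n hn z⁻¹ hcinv h1c hgen g
    refine ⟨(m : ℤ), -(m : ℤ), ?_, ?_⟩
    · rw [zpow_natCast]
      rw [inv_inv] at hl
      exact hl
    · rw [zpow_neg, zpow_natCast, ← inv_pow]
      exact hu
end

section
/- Let G = A ∗_C B be an amalgamated free product in which C is malnormal in A (gCg⁻¹ ∩ C = {1} for all g ∈ A \ C), and let T be the Bass–Serre tree. Then the action of G on T is 2-acylindrical: the pointwise stabilizer of any path of length at least 3 in T (equivalently, any subset of diameter ≥ 3) is trivial. -/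
private lemma fixauxX {G : Type*} [Group G] (A : Subgroup G) (k g : G)
    (h : k • (QuotientGroup.mk g : G ⧸ A) = QuotientGroup.mk g) : g⁻¹ * k * g ∈ A := by
  have h1 : (QuotientGroup.mk (k * g) : G ⧸ A) = QuotientGroup.mk g := h
  have h2 := A.inv_mem (QuotientGroup.eq.mp h1)
  have h3 : g⁻¹ * k * g = ((k * g)⁻¹ * g)⁻¹ := by group
  rw [h3]; exact h2

/-- if `C = A ⊓ B` is malnormal in `A`, then the action of `G` on
the Bass–Serre tree of `A ∗_C B` is 2-acylindrical: the pointwise stabilizer of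
any reduced path of length 3 (hence of any set of diameter ≥ 3) is trivial. -/
theorem stmt_17 {G : Type*} [Group G] (A B : Subgroup G)
    (hmal : ∀ a : G, a ∈ A → a ∉ A ⊓ B →
      ∀ c : G, c ∈ A ⊓ B → a * c * a⁻¹ ∈ A ⊓ B → c = 1)
    (T : SimpleGraph ((G ⧸ A) ⊕ (G ⧸ B)))
    (hadj : ∀ x y : (G ⧸ A) ⊕ (G ⧸ B), T.Adj x y ↔
      ∃ g : G, (x = Sum.inl (QuotientGroup.mk g) ∧ y = Sum.inr (QuotientGroup.mk g)) ∨
               (y = Sum.inl (QuotientGroup.mk g) ∧ x = Sum.inr (QuotientGroup.mk g)))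
    (htree : T.IsTree)
    (v : Fin 4 → (G ⧸ A) ⊕ (G ⧸ B))
    (hpath : ∀ i : Fin 3, T.Adj (v i.castSucc) (v i.succ))
    (hinj : Function.Injective v)
    (k : G)
    (hfix : ∀ i : Fin 4,
      Sum.map (fun x : G ⧸ A => k • x) (fun y : G ⧸ B => k • y) (v i) = v i) :
    k = 1 := by
  have e0 : T.Adj (v 0) (v 1) := by
    have h := hpath 0
    have h1 : (0 : Fin 3).castSucc = (0 : Fin 4) := by decide
    have h2 : (0 : Fin 3).succ = (1 : Fin 4) := by decide
    rwa [h1, h2] at h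
  have e1 : T.Adj (v 1) (v 2) := by
    have h := hpath 1
    have h1 : (1 : Fin 3).castSucc = (1 : Fin 4) := by decide
    have h2 : (1 : Fin 3).succ = (2 : Fin 4) := by decide
    rwa [h1, h2] at h
  have e2 : T.Adj (v 2) (v 3) := by
    have h := hpath 2
    have h1 : (2 : Fin 3).castSucc = (2 : Fin 4) := by decide
    have h2 : (2 : Fin 3).succ = (3 : Fin 4) := by decide
    rwa [h1, h2] at h
  obtain ⟨g1, h1⟩ := (hadj _ _).mp e0
  obtain ⟨g2, h2⟩ := (hadj _ _).mp e1
  obtain ⟨g3, h3⟩ := (hadj _ _).mp e2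
  rcases h1 with ⟨hv0, hv1⟩ | ⟨hv1, hv0⟩
  · -- v0 = inl g1, v1 = inr g1
    rcases h2 with ⟨hv1', hv2⟩ | ⟨hv2, hv1'⟩
    · rw [hv1] at hv1'; exact absurd hv1' (by simp)
    · -- v2 = inl g2, v1 = inr g2
      rcases h3 with ⟨hv2', hv3⟩ | ⟨hv3, hv2'⟩
      · -- v2 = inl g3, v3 = inr g3
        have eqA : (QuotientGroup.mk g2 : G ⧸ A) = QuotientGroup.mk g3 := by
          rw [hv2] at hv2'; exact Sum.inl.inj hv2'
        have hA2 : g2⁻¹ * k * g2 ∈ A := by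
          have h := hfix 2; rw [hv2] at h
          exact fixauxX A k g2 (Sum.inl.inj h)
        have hB2 : g2⁻¹ * k * g2 ∈ B := by
          have h := hfix 1; rw [hv1'] at h
          exact fixauxX B k g2 (Sum.inr.inj h)
        have hB3 : g3⁻¹ * k * g3 ∈ B := by
          have h := hfix 3; rw [hv3] at h
          exact fixauxX B k g3 (Sum.inr.inj h)
        have haA : g2⁻¹ * g3 ∈ A := QuotientGroup.eq.mp eqA
        have haB : g2⁻¹ * g3 ∉ B := by
          intro hb
          have : (QuotientGroup.mk g2 : G ⧸ B) = QuotientGroup.mk g3 :=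
            QuotientGroup.eq.mpr hb
          have hne : v 1 ≠ v 3 := fun h => absurd (hinj h) (by decide)
          exact hne (by rw [hv1', hv3, this])
        set a := g2⁻¹ * g3 with ha
        set c2 := g2⁻¹ * k * g2 with hc2
        have key : a⁻¹ * c2 * (a⁻¹)⁻¹ = g3⁻¹ * k * g3 := by
          rw [ha, hc2]; group
        have hc2one : c2 = 1 := by
          refine hmal a⁻¹ (A.inv_mem haA) ?_ c2 ⟨hA2, hB2⟩ ?_
          · intro hmem
            exact haB (by simpa using B.inv_mem hmem.2)
          · refine ⟨?_, ?_⟩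
            · rw [key]
              have : g3⁻¹ * k * g3 = a⁻¹ * c2 * a := by rw [ha, hc2]; group
              rw [this]
              exact A.mul_mem (A.mul_mem (A.inv_mem haA) hA2) haA
            · rw [key]; exact hB3
        have : k = g2 * c2 * g2⁻¹ := by rw [hc2]; group
        rw [this, hc2one, mul_one, mul_inv_cancel]
      · rw [hv2] at hv2'; exact absurd hv2' (by simp)
  · -- v1 = inl g1, v0 = inr g1
    rcases h2 with ⟨hv1', hv2⟩ | ⟨hv2, hv1'⟩
    · -- v1 = inl g2, v2 = inr g2
      have eqA : (QuotientGroup.mk g1 : G ⧸ A) = QuotientGroup.mk g2 := by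
        rw [hv1] at hv1'; exact Sum.inl.inj hv1'
      have hA1 : g1⁻¹ * k * g1 ∈ A := by
        have h := hfix 1; rw [hv1] at h
        exact fixauxX A k g1 (Sum.inl.inj h)
      have hB1 : g1⁻¹ * k * g1 ∈ B := by
        have h := hfix 0; rw [hv0] at h
        exact fixauxX B k g1 (Sum.inr.inj h)
      have hB2 : g2⁻¹ * k * g2 ∈ B := by
        have h := hfix 2; rw [hv2] at h
        exact fixauxX B k g2 (Sum.inr.inj h)
      have haA : g1⁻¹ * g2 ∈ A := QuotientGroup.eq.mp eqA
      have haB : g1⁻¹ * g2 ∉ B := by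
        intro hb
        have : (QuotientGroup.mk g1 : G ⧸ B) = QuotientGroup.mk g2 :=
          QuotientGroup.eq.mpr hb
        have hne : v 0 ≠ v 2 := fun h => absurd (hinj h) (by decide)
        exact hne (by rw [hv0, hv2, this])
      set a := g1⁻¹ * g2 with ha
      set c := g1⁻¹ * k * g1 with hc
      have key : a⁻¹ * c * (a⁻¹)⁻¹ = g2⁻¹ * k * g2 := by
        rw [ha, hc]; group
      have hcone : c = 1 := by
        refine hmal a⁻¹ (A.inv_mem haA) ?_ c ⟨hA1, hB1⟩ ?_
        · intro hmem
          exact haB (by simpa using B.inv_mem hmem.2)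
        · refine ⟨?_, ?_⟩
          · rw [key]
            have : g2⁻¹ * k * g2 = a⁻¹ * c * a := by rw [ha, hc]; group
            rw [this]
            exact A.mul_mem (A.mul_mem (A.inv_mem haA) hA1) haA
          · rw [key]; exact hB2
      have : k = g1 * c * g1⁻¹ := by rw [hc]; group
      rw [this, hcone, mul_one, mul_inv_cancel]
    · rw [hv1] at hv1'; exact absurd hv1' (by simp)
end

section
/- Let G be a finitely generated group acting on a tree T with finitely many orbits of edges. If v is a vertex of T such that the stabilizer of every edge adjacent to v is finitely generated, then the stabilizer G_v of v is finitely generated. -/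
namespace Stmt18Aux

open SimpleGraph

attribute [local instance] Classical.propDecidable

variable {V : Type*} {T : SimpleGraph V}

lemma getVert_map {V' : Type*} {T' : SimpleGraph V'} (f : T →g T') {u w : V}
    (p : T.Walk u w) (i : ℕ) : (p.map f).getVert i = f (p.getVert i) := by
  induction p generalizing i with
  | nil => simp [SimpleGraph.Walk.getVert]
  | cons h q ih =>
    cases i with
    | zero => simp
    | succ n => simpa [SimpleGraph.Walk.getVert_cons_succ] using ih n

lemma getVert_mem_support {u w : V} (p : T.Walk u w) (i : ℕ) :
    p.getVert i ∈ p.support := by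
  induction p generalizing i with
  | nil => simp [SimpleGraph.Walk.getVert]
  | cons h q ih =>
    cases i with
    | zero => simp
    | succ n =>
      rw [SimpleGraph.Walk.getVert_cons_succ]
      simp [ih n]

lemma getVert_one_append {u w x : V} (p : T.Walk u w) (q : T.Walk w x)
    (hp : p.length ≠ 0) : (p.append q).getVert 1 = p.getVert 1 := by
  cases p with
  | nil => simp at hp
  | cons h r =>
    rw [SimpleGraph.Walk.cons_append, SimpleGraph.Walk.getVert_cons_succ,
      SimpleGraph.Walk.getVert_cons_succ, SimpleGraph.Walk.getVert_zero,
      SimpleGraph.Walk.getVert_zero]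

section Pth

variable (hup : ∀ u w : V, ∃! p : T.Walk u w, p.IsPath)

noncomputable def pth (u w : V) : T.Walk u w := (hup u w).exists.choose

lemma pth_isPath (u w : V) : (pth hup u w).IsPath := (hup u w).exists.choose_spec

lemma pth_eq {u w : V} (q : T.Walk u w) (hq : q.IsPath) : q = pth hup u w :=
  ((hup u w).unique hq (pth_isPath hup u w))

noncomputable def dlt (v p : V) : V := (pth hup v p).getVert 1

lemma dlt_spec {v p x y : V} (q : T.Walk x y) (hq : q.IsPath) (hx : x = v) (hy : y = p) :
    dlt hup v p = q.getVert 1 := by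
  subst hx; subst hy
  rw [dlt, ← pth_eq hup q hq]

lemma dlt_adj {v u : V} (h : u ≠ v) : T.Adj v (dlt hup v u) := by
  have hlen : (pth hup v u).length ≠ 0 := by
    intro h0
    exact h (SimpleGraph.Walk.eq_of_length_eq_zero h0).symm
  have := (pth hup v u).adj_getVert_succ (i := 0) (Nat.pos_of_ne_zero hlen)
  simpa [dlt] using this

lemma dlt_adj_eq {v x y : V} (hxy : T.Adj x y) (hx : x ≠ v) (hy : y ≠ v) :
    dlt hup v x = dlt hup v y := by
  classical
  set P := pth hup v x with hP
  have hPp : P.IsPath := pth_isPath hup v x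
  have hPlen : P.length ≠ 0 := by
    intro h0
    exact hx (SimpleGraph.Walk.eq_of_length_eq_zero h0).symm
  by_cases hmem : y ∈ P.support
  · have hQ : (P.takeUntil y hmem).IsPath := hPp.takeUntil hmem
    have h1 : dlt hup v y = (P.takeUntil y hmem).getVert 1 :=
      dlt_spec hup _ hQ rfl rfl
    have hQlen : (P.takeUntil y hmem).length ≠ 0 := by
      intro h0
      exact hy (SimpleGraph.Walk.eq_of_length_eq_zero h0).symm
    have h2 : P.getVert 1 = (P.takeUntil y hmem).getVert 1 := by
      conv_lhs => rw [← SimpleGraph.Walk.take_spec P hmem]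
      exact getVert_one_append _ _ hQlen
    rw [h1, ← h2, dlt, ← hP]
  · have hQ : (P.concat hxy).IsPath := by
      rw [SimpleGraph.Walk.isPath_def, SimpleGraph.Walk.support_concat]
      refine List.Nodup.append hPp.support_nodup (by simp) ?_
      intro a ha hb
      simp only [List.mem_singleton] at hb
      exact hmem (hb ▸ ha)
    have h1 : dlt hup v y = (P.concat hxy).getVert 1 := dlt_spec hup _ hQ rfl rfl
    rw [h1, SimpleGraph.Walk.concat_eq_append, getVert_one_append _ _ hPlen, dlt, ← hP]

lemma dlt_const_walk {v x y : V} (W : T.Walk x y) (h : ∀ u ∈ W.support, u ≠ v) :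
    dlt hup v x = dlt hup v y := by
  induction W with
  | nil => rfl
  | cons hadj W ih =>
    rename_i a b c
    have h1 : dlt hup v a = dlt hup v b := by
      refine dlt_adj_eq hup hadj (h a ?_) (h b ?_)
      · simp
      · simp [SimpleGraph.Walk.support_cons, W.start_mem_support]
    rw [h1]
    exact ih fun u hu => h u (by simp [SimpleGraph.Walk.support_cons, hu])

end Pth


section Act

variable {G : Type*} [Group G] [MulAction G V]

def act (hact : ∀ (g : G) (u w : V), T.Adj u w → T.Adj (g • u) (g • w)) (g : G) : T →g T :=
  ⟨fun u => g • u, fun {a b} h => hact g a b h⟩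

@[simp] lemma act_apply (hact : ∀ (g : G) (u w : V), T.Adj u w → T.Adj (g • u) (g • w))
    (g : G) (u : V) : act hact g u = g • u := rfl

lemma act_injective (hact : ∀ (g : G) (u w : V), T.Adj u w → T.Adj (g • u) (g • w)) (g : G) :
    Function.Injective (act hact g : V → V) := MulAction.injective g

variable (G) in
noncomputable def gam (v z : V) : G :=
  if h : ∃ g : G, g • z = v then h.choose else 1

lemma gam_spec (v z : V) (h : ∃ g : G, g • z = v) : gam G v z • z = v := by
  rw [gam, dif_pos h]
  exact h.choose_spec

variable (G) in
noncomputable def trp (v w x : V) : G :=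
  if h : ∃ η : G, η • v = v ∧ η • x = w then h.choose else 1

lemma trp_fix (v w x : V) : trp G v w x • v = v := by
  rw [trp]
  split
  · next h => exact h.choose_spec.1
  · exact one_smul _ _

lemma trp_spec (v w x : V) (h : ∃ η : G, η • v = v ∧ η • x = w) : trp G v w x • x = w := by
  rw [trp, dif_pos h]
  exact h.choose_spec.2

variable (G) in
noncomputable def genC (v w : V) : Set G :=
  if h : (MulAction.stabilizer G v ⊓ MulAction.stabilizer G w).FG then
    ((MulAction.stabilizer G v ⊓ MulAction.stabilizer G w).fg_iff.mp h).choose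
  else ∅

lemma genC_closure (v w : V) (h : (MulAction.stabilizer G v ⊓ MulAction.stabilizer G w).FG) :
    Subgroup.closure (genC G v w) = MulAction.stabilizer G v ⊓ MulAction.stabilizer G w := by
  rw [genC, dif_pos h]
  exact ((MulAction.stabilizer G v ⊓ MulAction.stabilizer G w).fg_iff.mp h).choose_spec.1

lemma genC_subset (v w : V) :
    genC G v w ⊆ (MulAction.stabilizer G v ⊓ MulAction.stabilizer G w : Subgroup G) := by
  rw [genC]
  split
  · next h =>
    have hcl := ((MulAction.stabilizer G v ⊓ MulAction.stabilizer G w).fg_iff.mp h).choose_spec.1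
    intro x hx
    have hx2 := Subgroup.subset_closure hx
    rw [hcl] at hx2
    exact hx2
  · exact Set.empty_subset _

lemma genC_finite (v w : V) : (genC G v w).Finite := by
  rw [genC]
  split
  · next h => exact ((MulAction.stabilizer G v ⊓ MulAction.stabilizer G w).fg_iff.mp h).choose_spec.2
  · exact Set.finite_empty

end Act


section Smul

variable {G : Type*} [Group G] [MulAction G V]
variable (hup : ∀ u w : V, ∃! p : T.Walk u w, p.IsPath)
lemma pth_map_isPath (hact : ∀ (g : G) (u w : V), T.Adj u w → T.Adj (g • u) (g • w)) {u w : V} (g : G) : ((pth hup u w).map (act hact g)).IsPath :=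
  SimpleGraph.Walk.map_isPath_of_injective (act_injective hact g) (pth_isPath hup u w)

lemma dlt_smul (hact : ∀ (g : G) (u w : V), T.Adj u w → T.Adj (g • u) (g • w))
    {v : V} {g : G} (hgv : g • v = v) {u : V} (hu : u ≠ v) :
    dlt hup v (g • u) = g • dlt hup v u := by
  have h1 : dlt hup v (g • u)
      = (((pth hup v u).map (act hact g)).copy hgv rfl).getVert 1 := by
    refine dlt_spec hup _ ?_ rfl rfl
    refine (SimpleGraph.Walk.isPath_copy _ _ _).mpr ?_
    exact pth_map_isPath hup hact g
  rw [h1]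
  refine (SimpleGraph.Walk.getVert_copy _ _ _ _).trans ?_
  rw [getVert_map]
  rfl

end Smul

section MuL

variable {G : Type*} [Group G] [MulAction G V]
variable (hup : ∀ u w : V, ∃! p : T.Walk u w, p.IsPath)

noncomputable def muL (v : V) (l : List G) : ℕ :=
  (l.map (fun x => 1 + (pth hup v (x • v)).length)).sum

lemma muL_append (v : V) (l₁ l₂ : List G) :
    muL hup v (l₁ ++ l₂) = muL hup v l₁ + muL hup v l₂ := by
  simp [muL]

lemma length_le_muL (v : V) (l : List G) : l.length ≤ muL hup v l := by
  induction l with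
  | nil => simp [muL]
  | cons a l ih =>
    simp only [muL, List.map_cons, List.sum_cons, List.length_cons] at *
    omega

end MuL



section Main

variable {G : Type*} [Group G] [MulAction G V]

set_option maxHeartbeats 1000000 in
lemma main_ind
    (hup : ∀ u w : V, ∃! p : T.Walk u w, p.IsPath)
    (hact : ∀ (g : G) (u w : V), T.Adj u w → T.Adj (g • u) (g • w))
    (v : V) (S' : Set G) (Z : Set V)
    (hZ : ∀ s ∈ S', ∀ x ∈ (pth hup v (s • v)).support, x ∈ Z)
    (A : Set G) (hAS : S' ⊆ A)
    (hAgam : ∀ z ∈ Z, ∀ s ∈ S', gam G v z * s ∈ A)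
    (D : Set V)
    (hD1 : ∀ s ∈ S', dlt hup v (s⁻¹ • v) ∈ D)
    (hD2 : ∀ z ∈ Z, ∀ c ∈ Z, gam G v z • c ∈ D)
    (K : Subgroup G)
    (hKA : ∀ a ∈ A, a • v = v → a ∈ K)
    (htrans : ∀ a ∈ A, a • v ≠ v → ∀ x ∈ D, ∀ η : G, η • v = v →
        η • x = dlt hup v (a • v) → η ∈ K) :
    ∀ (n : ℕ) (l : List G), (∀ x ∈ l, x ∈ A) → (∀ x ∈ l.drop 1, x ∈ S') →
      l.prod • v = v → muL hup v l ≤ n → l.prod ∈ K := by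
  intro n
  induction n with
  | zero =>
    intro l _ _ hfix hmu
    have hlen := length_le_muL hup v l
    have : l.length = 0 := by omega
    rw [List.length_eq_zero_iff] at this
    subst this
    simpa using K.one_mem
  | succ n IH =>
    intro l hlA hlS hfix hmu
    -- small cases
    rcases Nat.lt_or_ge l.length 2 with hm | hm2
    · rcases Nat.lt_or_ge l.length 1 with hm0 | hm1
      · have : l.length = 0 := by omega
        rw [List.length_eq_zero_iff] at this
        subst this
        simpa using K.one_mem
      · have : l.length = 1 := by omega
        rw [List.length_eq_one_iff] at this
        obtain ⟨x, rfl⟩ := this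
        simp only [List.prod_cons, List.prod_nil, mul_one] at hfix ⊢
        exact hKA x (hlA x (by simp)) hfix
    -- main cases
    · have hm0 : 0 < l.length := by omega
      have htake1 : (l.take 1).prod = l[0] := by
        rw [List.prod_take_succ l 0 hm0]
        simp
      have hl0A : (l.take 1).prod ∈ A := by
        rw [htake1]; exact hlA _ (List.getElem_mem hm0)
      -- membership of later letters in S'
      have hmemS : ∀ (j : ℕ) (hj : j < l.length), 1 ≤ j → l[j] ∈ S' := by
        intro j hj hj1
        have h1 : j - 1 < (l.drop 1).length := by
          rw [List.length_drop]; omega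
        have : (l.drop 1)[j-1] = l[j] := by
          rw [List.getElem_drop]
          congr 1
          omega
        rw [← this]
        exact hlS _ (List.getElem_mem h1)
      by_cases hW : ∃ j, 1 ≤ j ∧ j < l.length ∧ (l.take j).prod • v = v
      · -- split case
        obtain ⟨j, hj1, hjlt, hjfix⟩ := hW
        have hsplit : (l.take j).prod * (l.drop j).prod = l.prod :=
          List.prod_take_mul_prod_drop l j
        have hmusplit : muL hup v (l.take j) + muL hup v (l.drop j) = muL hup v l := by
          rw [← muL_append]
          rw [List.take_append_drop]
        have hlen_take : (l.take j).length = j := by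
          rw [List.length_take]; omega
        have hlen_drop : (l.drop j).length = l.length - j := by
          rw [List.length_drop]
        have hmu_take : muL hup v (l.take j) ≤ n := by
          have h2 := length_le_muL hup v (l.drop j)
          omega
        have hmu_drop : muL hup v (l.drop j) ≤ n := by
          have h2 := length_le_muL hup v (l.take j)
          omega
        have h1 : (l.take j).prod ∈ K := by
          refine IH (l.take j) (fun x hx => hlA x (List.take_subset j l hx)) ?_ hjfix hmu_take
          intro x hx
          rw [List.drop_take] at hx
          exact hlS x (List.take_subset _ _ hx)
        have h2 : (l.drop j).prod ∈ K := by
          refine IH (l.drop j) (fun x hx => hlA x (List.drop_subset j l hx)) ?_ ?_ hmu_drop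
          · intro x hx
            rw [List.drop_drop] at hx
            have h5 : List.drop (j+1) l = List.drop j (List.drop 1 l) := by
              rw [List.drop_drop, Nat.add_comm]
            rw [h5] at hx
            exact hlS x (List.drop_subset _ _ hx)
          · have : (l.drop j).prod = (l.take j).prod⁻¹ * l.prod := by
              rw [← hsplit]; group
            rw [this, mul_smul, hfix, inv_smul_eq_iff, hjfix]
        rw [← hsplit]
        exact mul_mem h1 h2
      · -- no returns to v at proper prefixes
        have hp₁ : (l.take 1).prod • v ≠ v := by
          intro h
          exact hW ⟨1, le_refl 1, by omega, h⟩
        set w₁ := dlt hup v ((l.take 1).prod • v) with hw₁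
        -- step events
        set Q : ℕ → Prop := fun j => ∃ hj : j < l.length, 1 ≤ j ∧
          ((l.take j).prod⁻¹ • v ∈ (pth hup v (l[j] • v)).support ∧
            (l.take j).prod⁻¹ • v ≠ v ∧ (l.take j).prod⁻¹ • v ≠ l[j] • v) with hQdef
        -- the chain lemma
        have hchain : ∀ (j : ℕ), j < l.length → (∀ t, t < j → ¬ Q t) →
            ∀ t, 1 ≤ t → t ≤ j → dlt hup v ((l.take t).prod • v) = w₁ := by
          intro j hjlt hQmin
          intro t
          induction t with
          | zero => omega
          | succ t iht =>
            intro _ htj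
            rcases Nat.lt_or_ge t 1 with ht0 | ht1
            · have : t = 0 := by omega
              subst this
              rfl
            · have htlt : t < l.length := by omega
              have hIH' : dlt hup v ((l.take t).prod • v) = w₁ := iht ht1 (by omega)
              set s := l[t] with hsdef
              set g := (l.take t).prod with hgdef
              have hWmap : ∀ u ∈ ((pth hup v (s • v)).map (act hact g)).support, u ≠ v := by
                intro u hu huv
                rw [SimpleGraph.Walk.support_map] at hu
                obtain ⟨x, hx, hxu⟩ := List.mem_map.mp hu
                have hxeq : x = g⁻¹ • v := by
                  have : g • x = v := by rw [← huv, ← hxu]; rfl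
                  rw [← this, inv_smul_smul]
                have hgx : g • x = v := by rw [← hxu] at huv; exact huv
                by_cases hx1 : x = v
                · refine hW ⟨t, ht1, htlt, ?_⟩
                  rw [hx1] at hgx
                  exact hgx
                · by_cases hx2 : x = s • v
                  · refine hW ⟨t + 1, by omega, by omega, ?_⟩
                    rw [List.prod_take_succ l t htlt, mul_smul, ← hsdef, ← hgdef, ← hx2]
                    rw [← hxu] at huv
                    exact huv
                  · exact hQmin t (by omega) ⟨htlt, ht1, by rw [← hgdef, ← hxeq]; exact ⟨hx, hx1, hx2⟩⟩
              have hconst := dlt_const_walk hup ((pth hup v (s • v)).map (act hact g)) hWmap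
              have hend : dlt hup v ((l.take (t+1)).prod • v) = dlt hup v ((l.take t).prod • v) := by
                rw [List.prod_take_succ l t htlt, mul_smul]
                exact hconst.symm
              rw [hend, hIH']
        by_cases hE : ∃ j, Q j
        · -- cut case
          classical
          let j := Nat.find hE
          obtain ⟨hjlt, hj1, hmem, hzv, hzs⟩ := Nat.find_spec hE
          have hQmin : ∀ t, t < j → ¬ Q t := fun t ht => Nat.find_min hE ht
          set a := (l.take j).prod with hadef
          set s := l[j] with hsdef
          set z := a⁻¹ • v with hzdef
          have hsS : s ∈ S' := hmemS j hjlt hj1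
          have haz : a • z = v := smul_inv_smul a v
          have hzZ : z ∈ Z := hZ s hsS z hmem
          have hγ : gam G v z • z = v := gam_spec v z ⟨a, haz⟩
          have hchainj : dlt hup v (a • v) = w₁ := hchain j hjlt hQmin j hj1 (le_refl j)
          have hpj : a • v ≠ v := by
            intro h
            exact hW ⟨j, hj1, hjlt, h⟩
          -- the reversed take-until walk
          set P := pth hup v (s • v) with hPdef
          have hPpath : P.IsPath := pth_isPath hup v (s • v)
          set R := (P.takeUntil z hmem).reverse with hRdef
          have hRpath : R.IsPath := (hPpath.takeUntil hmem).reverse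
          have hRapath : ((R.map (act hact a)).copy haz rfl).IsPath := by
            refine (SimpleGraph.Walk.isPath_copy _ _ _).mpr ?_
            exact SimpleGraph.Walk.map_isPath_of_injective (act_injective hact a) hRpath
          have hdlt_pj : dlt hup v (a • v) = ((R.map (act hact a)).copy haz rfl).getVert 1 :=
            dlt_spec hup _ hRapath rfl rfl
          set c₁ := R.getVert 1 with hc₁def
          have hac₁ : a • c₁ = w₁ := by
            rw [← hchainj, hdlt_pj]
            refine Eq.trans ?_ (SimpleGraph.Walk.getVert_copy _ _ _ _).symm
            rw [getVert_map]
            rfl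
          have hc₁Z : c₁ ∈ Z := by
            refine hZ s hsS c₁ ?_
            have h1 : c₁ ∈ R.support := getVert_mem_support R 1
            rw [hRdef, SimpleGraph.Walk.support_reverse] at h1
            rw [List.mem_reverse] at h1
            exact SimpleGraph.Walk.support_takeUntil_subset P hmem h1
          set η := a * (gam G v z)⁻¹ with hηdef
          have hηv : η • v = v := by
            rw [hηdef, mul_smul]
            have : (gam G v z)⁻¹ • v = z := by
              rw [inv_smul_eq_iff, hγ]
            rw [this, haz]
          have hηx : η • (gam G v z • c₁) = w₁ := by
            rw [hηdef, mul_smul, ← mul_smul (gam G v z)⁻¹, inv_mul_cancel, one_smul, hac₁]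
          have hηK : η ∈ K :=
            htrans _ hl0A hp₁ (gam G v z • c₁) (hD2 z hzZ c₁ hc₁Z) η hηv (by rw [hηx, hw₁])
          -- the new list
          set l' := (gam G v z * s) :: l.drop (j+1) with hl'def
          have hdropj : l.drop j = s :: l.drop (j+1) := List.drop_eq_getElem_cons hjlt
          have hl'prod : l'.prod = η⁻¹ * l.prod := by
            rw [hl'def, List.prod_cons, hηdef]
            have h1 : (l.take j).prod * (l.drop j).prod = l.prod := List.prod_take_mul_prod_drop l j
            rw [← h1, hdropj, List.prod_cons, ← hadef]
            group
          have hl'fix : l'.prod • v = v := by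
            rw [hl'prod, mul_smul, hfix, inv_smul_eq_iff, hηv]
          have hl'A : ∀ x ∈ l', x ∈ A := by
            intro x hx
            rcases List.mem_cons.mp hx with h | h
            · rw [h]; exact hAgam z hzZ s hsS
            · refine hAS (hlS x ?_)
              have : l.drop (j+1) = (l.drop 1).drop j := by
                rw [List.drop_drop]
                congr 1
                omega
              rw [this] at h
              exact List.drop_subset _ _ h
          have hl'S : ∀ x ∈ l'.drop 1, x ∈ S' := by
            intro x hx
            simp only [hl'def, List.drop_succ_cons, List.drop_zero] at hx
            have : l.drop (j+1) = (l.drop 1).drop j := by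
              rw [List.drop_drop]; congr 1; omega
            rw [this] at hx
            exact hlS x (List.drop_subset _ _ hx)
          -- measure estimate
          have hlenT : (P.takeUntil z hmem).length ≠ 0 := by
            intro h0
            exact hzv (SimpleGraph.Walk.eq_of_length_eq_zero h0).symm
          have hlenTD : (P.takeUntil z hmem).length + (P.dropUntil z hmem).length = P.length := by
            conv_rhs => rw [← SimpleGraph.Walk.take_spec P hmem]
            rw [SimpleGraph.Walk.length_append]
          have hnewpath : ((((P.dropUntil z hmem).map (act hact (gam G v z))).copy hγ
              (show (act hact (gam G v z)) (s • v) = (gam G v z * s) • v by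
                rw [act_apply, mul_smul])).IsPath) := by
            refine (SimpleGraph.Walk.isPath_copy _ _ _).mpr ?_
            exact SimpleGraph.Walk.map_isPath_of_injective (act_injective hact _)
              (hPpath.dropUntil hmem)
          have hpthl' : (pth hup v ((gam G v z * s) • v)).length = (P.dropUntil z hmem).length := by
            rw [← pth_eq hup _ hnewpath]
            exact (SimpleGraph.Walk.length_copy _ _ _).trans (SimpleGraph.Walk.length_map _ _)
          have hmul' : muL hup v l' < muL hup v l := by
            have h1 : muL hup v l' = (1 + (P.dropUntil z hmem).length) + muL hup v (l.drop (j+1)) := by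
              rw [hl'def]
              simp only [muL, List.map_cons, List.sum_cons, hpthl']
            have h2 : muL hup v l = muL hup v (l.take j) + muL hup v (l.drop j) := by
              rw [← muL_append, List.take_append_drop]
            have h3 : muL hup v (l.drop j) = (1 + P.length) + muL hup v (l.drop (j+1)) := by
              rw [hdropj]
              simp only [muL, List.map_cons, List.sum_cons, hPdef]
            have h4 : j ≤ muL hup v (l.take j) := by
              have := length_le_muL hup v (l.take j)
              rw [List.length_take] at this
              omega
            omega
          have h2 : l'.prod ∈ K := IH l' hl'A hl'S hl'fix (by omega)
          have : l.prod = η * l'.prod := by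
            rw [hl'prod]
            group
          rw [this]
          exact mul_mem hηK h2
        · -- base case
          push_neg at hE
          set m := l.length with hmdef
          have hm1lt : m - 1 < m := by omega
          have hchainb : dlt hup v ((l.take (m-1)).prod • v) = w₁ :=
            hchain (m-1) hm1lt (fun t _ => hE t) (m-1) (by omega) (le_refl _)
          set a' := (l.take (m-1)).prod with ha'def
          set s := l[m-1] with hsdef
          have hsS : s ∈ S' := hmemS (m-1) hm1lt (by omega)
          have hprod : l.prod = a' * s := by
            have h1 : (l.take ((m-1)+1)).prod = (l.take (m-1)).prod * l[m-1] :=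
              List.prod_take_succ l (m-1) hm1lt
            have h2 : (m-1)+1 = m := by omega
            rw [h2] at h1
            have h3 : l.take m = l := by
              rw [hmdef]
              exact List.take_length
            rw [h3] at h1
            exact h1
          have hp' : a' • v ≠ v := by
            intro h
            exact hW ⟨m-1, by omega, hm1lt, h⟩
          have ha's : a' • v = l.prod • (s⁻¹ • v) := by
            rw [hprod, mul_smul, smul_inv_smul]
          have hsv : s⁻¹ • v ≠ v := by
            intro h
            apply hp'
            rw [ha's, h, hfix]
          have hv3 : dlt hup v (a' • v) = l.prod • dlt hup v (s⁻¹ • v) := by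
            rw [ha's]
            exact dlt_smul hup hact hfix hsv
          have hfinal : l.prod • dlt hup v (s⁻¹ • v) = w₁ := by
            rw [← hv3, hchainb]
          exact htrans _ hl0A hp₁ (dlt hup v (s⁻¹ • v)) (hD1 s hsS) l.prod hfix
            (by rw [hfinal, hw₁])

end Main

end Stmt18Aux

open Stmt18Aux Pointwise in
set_option maxHeartbeats 1000000 in
/-- if a finitely generated group acts on a tree with finitely
many orbits of edges and the stabilizer of every edge adjacent to `v` is
finitely generated, then the stabilizer of `v` is finitely generated. -/
theorem stmt_18 {G V : Type*} [Group G] [MulAction G V]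
    (T : SimpleGraph V) (htree : T.IsTree)
    (hact : ∀ (g : G) (u w : V), T.Adj u w → T.Adj (g • u) (g • w))
    (hfgG : Group.FG G)
    (E0 : Finset (V × V))
    (hcofin : ∀ u w : V, T.Adj u w → ∃ p ∈ E0, ∃ g : G, g • p.1 = u ∧ g • p.2 = w)
    (v : V)
    (hedge : ∀ w : V, T.Adj v w →
      (MulAction.stabilizer G v ⊓ MulAction.stabilizer G w).FG) :
    (MulAction.stabilizer G v).FG := by
  classical
  obtain ⟨S₀, hS₀cl, hS₀fin⟩ := Group.fg_iff.mp hfgG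
  set S' : Set G := S₀ ∪ S₀⁻¹ with hS'def
  have hS'fin : S'.Finite := hS₀fin.union hS₀fin.inv
  have hsym : ∀ s ∈ S', s⁻¹ ∈ S' := by
    intro s hs
    rcases hs with hs | hs
    · exact Or.inr (Set.inv_mem_inv.mpr hs)
    · exact Or.inl (Set.mem_inv.mp hs)
  have hup := htree.existsUnique_path
  set Z : Set V := ⋃ s ∈ S', {x | x ∈ (pth hup v (s • v)).support} with hZdef
  have hZfin : Z.Finite :=
    Set.Finite.biUnion hS'fin (fun s _ => (pth hup v (s • v)).support.finite_toSet)
  have hZ : ∀ s ∈ S', ∀ x ∈ (pth hup v (s • v)).support, x ∈ Z := by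
    intro s hs x hx
    exact Set.mem_biUnion hs hx
  set A : Set G := S' ∪ (fun p : V × G => gam G v p.1 * p.2) '' (Z ×ˢ S') with hAdef
  have hAfin : A.Finite := hS'fin.union ((hZfin.prod hS'fin).image _)
  have hAS : S' ⊆ A := Set.subset_union_left
  have hAgam : ∀ z ∈ Z, ∀ s ∈ S', gam G v z * s ∈ A := by
    intro z hz s hs
    exact Or.inr ⟨(z, s), ⟨hz, hs⟩, rfl⟩
  set Wg : Set V := (fun a : G => dlt hup v (a • v)) '' A with hWdef
  set X₂ : Set V := (fun p : V × V => gam G v p.1 • p.2) '' (Z ×ˢ Z) with hXdef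
  set D : Set V := Wg ∪ X₂ with hDdef
  have hD1 : ∀ s ∈ S', dlt hup v (s⁻¹ • v) ∈ D := by
    intro s hs
    exact Or.inl ⟨s⁻¹, hAS (hsym s hs), rfl⟩
  have hD2 : ∀ z ∈ Z, ∀ c ∈ Z, gam G v z • c ∈ D := by
    intro z hz c hc
    exact Or.inr ⟨(z, c), ⟨hz, hc⟩, rfl⟩
  have hDfin : D.Finite := (hAfin.image _).union ((hZfin.prod hZfin).image _)
  set F₂ : Set G := Set.image2 (fun w x => trp G v w x) Wg D with hF₂def
  have hF₂fin : F₂.Finite := Set.Finite.image2 _ (hAfin.image _) hDfin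
  set Cs : Set G := ⋃ w ∈ Wg, genC G v w with hCsdef
  have hCsfin : Cs.Finite := Set.Finite.biUnion (hAfin.image _) (fun w _ => genC_finite v w)
  set gens : Set G := ({a ∈ A | a • v = v} ∪ F₂) ∪ Cs with hgensdef
  have hgensfin : gens.Finite := ((hAfin.subset (Set.sep_subset _ _)).union hF₂fin).union hCsfin
  set K := Subgroup.closure gens with hKdef
  have hCsK : ∀ w ∈ Wg, genC G v w ⊆ gens := by
    intro w hw x hx
    exact Or.inr (Set.mem_biUnion hw hx)
  have hKle : K ≤ MulAction.stabilizer G v := by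
    rw [hKdef, Subgroup.closure_le]
    rintro x ((hx | hx) | hx)
    · exact hx.2
    · obtain ⟨w, hw, y, hy, rfl⟩ := Set.mem_image2.mp hx
      exact trp_fix v w y
    · rw [hCsdef] at hx
      obtain ⟨w, hw, hxw⟩ := Set.mem_iUnion₂.mp hx
      exact (genC_subset v w hxw).1
  have hKA : ∀ a ∈ A, a • v = v → a ∈ K :=
    fun a ha hav => Subgroup.subset_closure (Or.inl (Or.inl ⟨ha, hav⟩))
  have htrans : ∀ a ∈ A, a • v ≠ v → ∀ x ∈ D, ∀ η : G, η • v = v →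
      η • x = dlt hup v (a • v) → η ∈ K := by
    intro a ha hav x hx η hηv hηx
    set w := dlt hup v (a • v) with hwdef
    have hwW : w ∈ Wg := ⟨a, ha, rfl⟩
    have hadj : T.Adj v w := dlt_adj hup hav
    have hfg := hedge w hadj
    have hex : ∃ η' : G, η' • v = v ∧ η' • x = w := ⟨η, hηv, hηx⟩
    have h1 : trp G v w x • v = v := trp_fix v w x
    have h2 : trp G v w x • x = w := trp_spec v w x hex
    have hmemF : trp G v w x ∈ F₂ := Set.mem_image2_of_mem hwW hx
    have hη2 : η * (trp G v w x)⁻¹ ∈ MulAction.stabilizer G v ⊓ MulAction.stabilizer G w := by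
      constructor
      · show (η * (trp G v w x)⁻¹) • v = v
        rw [mul_smul]
        have : (trp G v w x)⁻¹ • v = v := by rw [inv_smul_eq_iff, h1]
        rw [this, hηv]
      · show (η * (trp G v w x)⁻¹) • w = w
        rw [mul_smul]
        have : (trp G v w x)⁻¹ • w = x := by rw [inv_smul_eq_iff, h2]
        rw [this, hηx]
    have hη2K : η * (trp G v w x)⁻¹ ∈ K := by
      have hcl : Subgroup.closure (genC G v w)
          = MulAction.stabilizer G v ⊓ MulAction.stabilizer G w := genC_closure v w hfg
      have hmem : η * (trp G v w x)⁻¹ ∈ Subgroup.closure (genC G v w) := by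
        rw [hcl]; exact hη2
      exact Subgroup.closure_mono (hCsK w hwW) hmem
    have htK : trp G v w x ∈ K := Subgroup.subset_closure (Or.inl (Or.inr hmemF))
    have := mul_mem hη2K htK
    simpa using this
  have hmain := main_ind hup hact v S' Z hZ A hAS hAgam D hD1 hD2 K hKA htrans
  have hstab_le : MulAction.stabilizer G v ≤ K := by
    intro h hh
    have hmem : h ∈ Subgroup.closure S' := by
      have hle : Subgroup.closure (S₀ : Set G) ≤ Subgroup.closure S' :=
        Subgroup.closure_mono Set.subset_union_left
      exact hle (hS₀cl ▸ Subgroup.mem_top h)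
    have hmem2 : h ∈ Submonoid.closure (S' ∪ S'⁻¹) := by
      have := Subgroup.closure_toSubmonoid S'
      rw [← this]
      exact hmem
    have hS'union : S' ∪ S'⁻¹ = S' := by
      apply Set.union_eq_self_of_subset_right
      intro x hx
      have : x⁻¹ ∈ S' := Set.mem_inv.mp hx
      simpa using hsym _ this
    rw [hS'union] at hmem2
    obtain ⟨lw, hlw, hlprod⟩ := Submonoid.exists_list_of_mem_closure hmem2
    have := hmain (muL hup v lw) lw (fun x hx => hAS (hlw x hx))
      (fun x hx => hlw x (List.drop_subset _ _ hx))
      (by rw [hlprod]; exact hh) le_rfl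
    rw [hlprod] at this
    exact this
  have hEq : Subgroup.closure gens = MulAction.stabilizer G v := by
    rw [← hKdef]
    exact le_antisymm hKle hstab_le
  rw [Subgroup.fg_iff]
  exact ⟨gens, hEq, hgensfin⟩
end
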